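/- arXiv:0802.0841 — 4 statements merged into one kernel-verified Lean document; each statement's English description precedes it below -/
import Mathlib

section
/- Let p ≥ 0 be an integer and z ∈ R an invertible power series. Then every monomial of total degree t+1 in the variables x₁,…,x_h, with the possible exception of x₁^{t+1}, lies in the ideal I_{p,z} + n^s. -/
noncomputable section

open MvPowerSeries

/-- The maximal ideal `(x₁, …, x_h)` of the power series ring. -/
def nIdeal (k : Type*) [Field k] (h : ℕ) : Ideal (MvPowerSeries (Fin h) k) :=
  Ideal.span (Set.range (X : Fin h → MvPowerSeries (Fin h) k))

/-- The ideal generated (in terms of a system of generators `y`) by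
`y i * y j` (`i < j`, `(i,j) ≠ (0,1)`), `y j ^ 2 - y 0 ^ s` (`j ≥ 2`),
`y 1 ^ 2 - y 0 ^ (p+1) * y 1 - w * y 0 ^ (s - t + 1)` and `y 0 ^ t * y 1`. -/
def Iy (k : Type*) [Field k] (n s t p : ℕ) (w : MvPowerSeries (Fin (n + 2)) k)
    (y : Fin (n + 2) → MvPowerSeries (Fin (n + 2)) k) :
    Ideal (MvPowerSeries (Fin (n + 2)) k) :=
  Ideal.span
    ({f | ∃ i j : Fin (n + 2), i < j ∧ (i, j) ≠ (0, 1) ∧ f = y i * y j} ∪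
     {f | ∃ j : Fin (n + 2), 2 ≤ (j : ℕ) ∧ f = y j ^ 2 - y 0 ^ s} ∪
     {y 1 ^ 2 - y 0 ^ (p + 1) * y 1 - w * y 0 ^ (s - t + 1), y 0 ^ t * y 1})

/-- The ideal `I_{p,z}`. -/
def Ipz (k : Type*) [Field k] (n s t p : ℕ) (z : MvPowerSeries (Fin (n + 2)) k) :
    Ideal (MvPowerSeries (Fin (n + 2)) k) :=
  Iy k n s t p z X

/-- The ideal `I_a`. -/
def Ia (k : Type*) [Field k] (n s t : ℕ) (a : MvPowerSeries (Fin (n + 2)) k) :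
    Ideal (MvPowerSeries (Fin (n + 2)) k) :=
  Ideal.span
    ({f | ∃ i j : Fin (n + 2), i < j ∧ (i, j) ≠ (0, 1) ∧ f = X i * X j} ∪
     {f | ∃ j : Fin (n + 2), 2 ≤ (j : ℕ) ∧ f = X j ^ 2 - X 0 ^ s} ∪
     {X 1 ^ 2 - a * X 0 * X 1 - X 0 ^ (s - t + 1), X 0 ^ t * X 1})

/-- Two ideals are isomorphic iff the quotient `k`-algebras are isomorphic. -/
def IdealIso (k : Type*) [Field k] {h : ℕ} (I J : Ideal (MvPowerSeries (Fin h) k)) : Prop :=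
  Nonempty ((MvPowerSeries (Fin h) k ⧸ I) ≃ₐ[k] (MvPowerSeries (Fin h) k ⧸ J))

/-- The ideal `(x₂, …, x_h)`. -/
def offIdeal (k : Type*) [Field k] (n : ℕ) : Ideal (MvPowerSeries (Fin (n + 2)) k) :=
  Ideal.span {f | ∃ i : Fin (n + 2), i ≠ 0 ∧ f = X i}

end

section Aux
open MvPowerSeries
variable {k : Type*} [Field k] {n s t p : ℕ} {z : MvPowerSeries (Fin (n + 2)) k}

lemma memL {R : Type*} [CommRing R] {I J : Ideal R} {x : R} (h : x ∈ I) : x ∈ I + J :=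
  Submodule.mem_sup_left h

lemma memR {R : Type*} [CommRing R] {I J : Ideal R} {x : R} (h : x ∈ J) : x ∈ I + J :=
  Submodule.mem_sup_right h

lemma X_mem_nIdeal (i : Fin (n + 2)) : (X i : MvPowerSeries (Fin (n + 2)) k) ∈ nIdeal k (n + 2) :=
  Ideal.subset_span ⟨i, rfl⟩

lemma XX_mem_nspow (c d : ℕ) (h : s ≤ c + d) :
    (X 0 : MvPowerSeries (Fin (n + 2)) k) ^ c * X 1 ^ d ∈ nIdeal k (n + 2) ^ s := by
  refine Ideal.pow_le_pow_right h ?_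
  rw [pow_add]
  exact Ideal.mul_mem_mul (Ideal.pow_mem_pow (X_mem_nIdeal 0) c)
    (Ideal.pow_mem_pow (X_mem_nIdeal 1) d)

lemma gen1 {i j : Fin (n + 2)} (hij : i < j) (hneq : (i, j) ≠ (0, 1)) :
    (X i * X j : MvPowerSeries (Fin (n + 2)) k) ∈ Ipz k n s t p z :=
  Ideal.subset_span (Or.inl (Or.inl ⟨i, j, hij, hneq, rfl⟩))

lemma gen2 {j : Fin (n + 2)} (hj : 2 ≤ (j : ℕ)) :
    ((X j) ^ 2 - X 0 ^ s : MvPowerSeries (Fin (n + 2)) k) ∈ Ipz k n s t p z :=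
  Ideal.subset_span (Or.inl (Or.inr ⟨j, hj, rfl⟩))

lemma gen3 : (X 1 ^ 2 - X 0 ^ (p + 1) * X 1 - z * X 0 ^ (s - t + 1) :
    MvPowerSeries (Fin (n + 2)) k) ∈ Ipz k n s t p z :=
  Ideal.subset_span (Or.inr (Or.inl rfl))

lemma gen4 : (X 0 ^ t * X 1 : MvPowerSeries (Fin (n + 2)) k) ∈ Ipz k n s t p z :=
  Ideal.subset_span (Or.inr (Or.inr rfl))

lemma claimL (hst : t + 1 ≤ s) :
    ∀ b, 1 ≤ b → ∀ a, t + 1 ≤ a + b →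
    (X 0 ^ a * X 1 ^ b : MvPowerSeries (Fin (n + 2)) k) ∈
      Ipz k n s t p z + nIdeal k (n + 2) ^ s := by
  intro b
  induction b using Nat.strong_induction_on with
  | _ b ih =>
    intro hb a hab
    rcases b with _ | b
    · omega
    rcases b with _ | b'
    · -- b = 1, so a ≥ t
      have ha : t ≤ a := by omega
      have hfac : (X 0 ^ a * X 1 ^ 1 : MvPowerSeries (Fin (n + 2)) k)
          = X 0 ^ (a - t) * (X 0 ^ t * X 1) := by
        rw [pow_one, ← mul_assoc, ← pow_add, Nat.sub_add_cancel ha]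
      rw [hfac]
      exact memL (Ideal.mul_mem_left _ _ gen4)
    · -- b = b' + 2
      have key : (X 0 ^ a * X 1 ^ (b' + 2) : MvPowerSeries (Fin (n + 2)) k)
          = (X 0 ^ a * X 1 ^ b') * (X 1 ^ 2 - X 0 ^ (p + 1) * X 1 - z * X 0 ^ (s - t + 1))
            + X 0 ^ (a + (p + 1)) * X 1 ^ (b' + 1)
            + z * (X 0 ^ (s - t + 1 + a) * X 1 ^ b') := by
        ring
      rw [key]
      refine add_mem (add_mem ?_ ?_) ?_
      · exact memL (Ideal.mul_mem_left _ _ gen3)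
      · exact ih (b' + 1) (by omega) (by omega) (a + (p + 1)) (by omega)
      · exact memR (Ideal.mul_mem_left _ _ (XX_mem_nspow _ _ (by omega)))

end Aux

open MvPowerSeries in
/-- Every monomial of total degree `t + 1`, except possibly `x₁^{t+1}`, lies in
`I_{p,z} + n^s`. -/
theorem stmt_11 {k : Type*} [Field k] [IsAlgClosed k] [CharZero k] (n s t : ℕ)
    (hst : t + 1 ≤ s) (ht : 3 ≤ t + 1)
    (p : ℕ) (z : MvPowerSeries (Fin (n + 2)) k) (hz : IsUnit z)
    (m : Fin (n + 2) →₀ ℕ) (hdeg : (m.sum fun _ e => e) = t + 1)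
    (hne : m ≠ Finsupp.single 0 (t + 1)) :
    (monomial m 1 : MvPowerSeries (Fin (n + 2)) k) ∈
      Ipz k n s t p z + (nIdeal k (n + 2)) ^ s := by
  have h01 : (0 : Fin (n + 2)) ≠ 1 := by simp [Fin.ext_iff]
  by_cases hcase : ∃ i : Fin (n + 2), 2 ≤ (i : ℕ) ∧ 1 ≤ m i
  · obtain ⟨i, hi2, hmi⟩ := hcase
    by_cases hmi2 : 2 ≤ m i
    · have hle : Finsupp.single i 2 ≤ m := Finsupp.single_le_iff.mpr hmi2
      have hfac : (monomial m 1 : MvPowerSeries (Fin (n + 2)) k)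
          = monomial (m - Finsupp.single i 2) 1 * (X i) ^ 2 := by
        rw [X_pow_eq, monomial_mul_monomial, one_mul, tsub_add_cancel_of_le hle]
      have hsplit : ((X i : MvPowerSeries (Fin (n + 2)) k)) ^ 2
          = ((X i) ^ 2 - X 0 ^ s) + X 0 ^ s := by ring
      rw [hfac, hsplit, mul_add]
      exact add_mem (memL (Ideal.mul_mem_left _ _ (gen2 hi2)))
        (memR (Ideal.mul_mem_left _ _ (Ideal.pow_mem_pow (X_mem_nIdeal 0) s)))
    · have hmi1 : m i = 1 := by omega
      have hj : ∃ j, j ≠ i ∧ 1 ≤ m j := by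
        by_contra hc
        push_neg at hc
        have hsum : (m.sum fun _ e => e) = m i := by
          refine Finset.sum_eq_single i (fun b _ hb => ?_) (fun h => ?_)
          · show m b = 0
            have := hc b hb
            omega
          · show m i = 0
            exact Finsupp.notMem_support_iff.mp h
        omega
      obtain ⟨j, hji, hmj⟩ := hj
      have hgen : (X i * X j : MvPowerSeries (Fin (n + 2)) k) ∈ Ipz k n s t p z := by
        rcases lt_or_gt_of_ne hji with h | h
        · have hne2 : (j, i) ≠ ((0 : Fin (n + 2)), 1) := by
            intro he
            simp only [Prod.mk.injEq] at he
            rw [he.2] at hi2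
            simp [Fin.val_one] at hi2
          rw [mul_comm]
          exact gen1 h hne2
        · have hne2 : (i, j) ≠ ((0 : Fin (n + 2)), 1) := by
            intro he
            simp only [Prod.mk.injEq] at he
            rw [he.1] at hi2
            simp at hi2
          exact gen1 h hne2
      have hle : Finsupp.single i 1 + Finsupp.single j 1 ≤ m := by
        refine Finsupp.le_def.mpr fun a => ?_
        by_cases hai : a = i
        · subst hai
          rw [Finsupp.add_apply, Finsupp.single_eq_same, Finsupp.single_eq_of_ne' hji]
          omega
        · by_cases haj : a = j
          · subst haj
            rw [Finsupp.add_apply, Finsupp.single_eq_same,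
              Finsupp.single_eq_of_ne' (fun h => hai h.symm)]
            omega
          · rw [Finsupp.add_apply, Finsupp.single_eq_of_ne' (fun h => hai h.symm),
              Finsupp.single_eq_of_ne' (fun h => haj h.symm)]
            omega
      have hXX : (X i * X j : MvPowerSeries (Fin (n + 2)) k)
          = monomial (Finsupp.single i 1 + Finsupp.single j 1) 1 := by
        rw [← pow_one (X i : MvPowerSeries (Fin (n + 2)) k),
          ← pow_one (X j : MvPowerSeries (Fin (n + 2)) k), X_pow_eq, X_pow_eq,
          monomial_mul_monomial, one_mul]
      have hfac : (monomial m 1 : MvPowerSeries (Fin (n + 2)) k)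
          = monomial (m - (Finsupp.single i 1 + Finsupp.single j 1)) 1 * (X i * X j) := by
        rw [hXX, monomial_mul_monomial, one_mul, tsub_add_cancel_of_le hle]
      rw [hfac]
      exact memL (Ideal.mul_mem_left _ _ hgen)
  · push_neg at hcase
    have hm : m = Finsupp.single 0 (m 0) + Finsupp.single 1 (m 1) := by
      ext a
      by_cases ha0 : a = 0
      · subst ha0
        rw [Finsupp.add_apply, Finsupp.single_eq_same, Finsupp.single_eq_of_ne' h01.symm]
        omega
      · by_cases ha1 : a = 1
        · subst ha1
          rw [Finsupp.add_apply, Finsupp.single_eq_same, Finsupp.single_eq_of_ne' h01]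
          omega
        · have ha2 : 2 ≤ (a : ℕ) := by
            have hv0 : (a : ℕ) ≠ 0 := fun h => ha0 (Fin.ext (by simp [h]))
            have hv1 : (a : ℕ) ≠ 1 := fun h => ha1 (Fin.ext (by simp [h, Fin.val_one]))
            omega
          have hma := hcase a ha2
          rw [Finsupp.add_apply, Finsupp.single_eq_of_ne' (fun h => ha0 h.symm),
            Finsupp.single_eq_of_ne' (fun h => ha1 h.symm)]
          omega
    have hsum : m 0 + m 1 = t + 1 := by
      rw [hm, Finsupp.sum_add_index' (fun _ => rfl) (fun _ _ _ => rfl),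
        Finsupp.sum_single_index rfl, Finsupp.sum_single_index rfl] at hdeg
      exact hdeg
    have hb : 1 ≤ m 1 := by
      by_contra hb0
      push_neg at hb0
      apply hne
      have hm10 : m 1 = 0 := by omega
      rw [hm, hm10, Finsupp.single_zero, add_zero]
      congr 1
      omega
    have hfac : (monomial m 1 : MvPowerSeries (Fin (n + 2)) k)
        = X 0 ^ (m 0) * X 1 ^ (m 1) := by
      rw [X_pow_eq, X_pow_eq, monomial_mul_monomial, one_mul, ← hm]
    rw [hfac]
    exact claimL hst (m 1) hb (m 0) (by omega)
end

section
/- Assume s ≥ 2t, let r be an integer with 1 ≤ r ≤ t−2 and 2(r+1) = s−t+1, and let w ∈ R be an invertible power series. Then every monomial of total degree r+2 in the variables x₁,…,x_h, with the possible exceptions of x₁^{r+2} and x₁^{r+1} x₂, lies in the ideal I_{r,w} + n^{3r+2}. -/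
open MvPowerSeries in
/-- If `s ≥ 2t`, `1 ≤ r ≤ t - 2`, `2(r+1) = s - t + 1` and `w` is invertible, then every
monomial of total degree `r + 2`, except possibly `x₁^{r+2}` and `x₁^{r+1} x₂`, lies in
`I_{r,w} + n^{3r+2}`. -/
theorem stmt_14 {k : Type*} [Field k] [IsAlgClosed k] [CharZero k] (n s t : ℕ)
    (hst : t + 1 ≤ s) (ht : 3 ≤ t + 1) (h2t : 2 * t ≤ s)
    (r : ℕ) (hr1 : 1 ≤ r) (hr2 : r ≤ t - 2) (hr3 : 2 * (r + 1) = s - t + 1)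
    (w : MvPowerSeries (Fin (n + 2)) k) (hw : IsUnit w)
    (m : Fin (n + 2) →₀ ℕ) (hdeg : (m.sum fun _ e => e) = r + 2)
    (hne1 : m ≠ Finsupp.single 0 (r + 2))
    (hne2 : m ≠ Finsupp.single 0 (r + 1) + Finsupp.single 1 1) :
    (monomial m 1 : MvPowerSeries (Fin (n + 2)) k) ∈
      Ipz k n s t r w + (nIdeal k (n + 2)) ^ (3 * r + 2) := by

  classical
  set N := 3 * r + 2 with hN
  have hsup : Ipz k n s t r w + (nIdeal k (n + 2)) ^ N
      = Ipz k n s t r w ⊔ (nIdeal k (n + 2)) ^ N := Submodule.add_eq_sup _ _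
  rw [hsup]
  have hpair : ∀ i j : Fin (n + 2), i < j → (i, j) ≠ (0, 1) →
      (X i * X j : MvPowerSeries (Fin (n + 2)) k) ∈ Ipz k n s t r w :=
    fun i j h1 h2 => Ideal.subset_span (Or.inl (Or.inl ⟨i, j, h1, h2, rfl⟩))
  have hsq : ∀ j : Fin (n + 2), 2 ≤ (j : ℕ) →
      (X j ^ 2 - X 0 ^ s : MvPowerSeries (Fin (n + 2)) k) ∈ Ipz k n s t r w :=
    fun j hj => Ideal.subset_span (Or.inl (Or.inr ⟨j, hj, rfl⟩))
  have hG : (X 1 ^ 2 - X 0 ^ (r + 1) * X 1 - w * X 0 ^ (s - t + 1) :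
      MvPowerSeries (Fin (n + 2)) k) ∈ Ipz k n s t r w :=
    Ideal.subset_span (Or.inr (Set.mem_insert _ _))
  have hH : (X 0 ^ t * X 1 : MvPowerSeries (Fin (n + 2)) k) ∈ Ipz k n s t r w :=
    Ideal.subset_span (Or.inr (Set.mem_insert_of_mem _ rfl))
  have hu : s - t + 1 = 2 * r + 2 := by omega
  rw [hu] at hG
  have htr : t ≤ 2 * r + 1 := by omega
  have hX0 : (X 0 : MvPowerSeries (Fin (n + 2)) k) ∈ nIdeal k (n + 2) :=
    Ideal.subset_span ⟨0, rfl⟩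
  have hX1 : (X 1 : MvPowerSeries (Fin (n + 2)) k) ∈ nIdeal k (n + 2) :=
    Ideal.subset_span ⟨1, rfl⟩
  have h01 : (0 : Fin (n + 2)) ≠ 1 := by
    intro hcon
    have := congrArg Fin.val hcon
    simp [Fin.val_zero, Fin.val_one] at this
  -- the key computational lemma
  have key : ∀ a b : ℕ, a + b = r + 2 → 2 ≤ b →
      (X 0 : MvPowerSeries (Fin (n + 2)) k) ^ a * X 1 ^ b ∈
        Ipz k n s t r w ⊔ (nIdeal k (n + 2)) ^ N := by
    intro a b hab hb
    rcases eq_or_lt_of_le hb with rfl | hb3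
    · -- b = 2, a = r
      have ha : a = r := by omega
      obtain ⟨c, hc⟩ : ∃ c, c + t = a + r + 1 := ⟨a + r + 1 - t, by omega⟩
      have e1 : (X 0 : MvPowerSeries (Fin (n + 2)) k) ^ c * X 0 ^ t
          = X 0 ^ (r + 1) * X 0 ^ a := by
        rw [← pow_add, ← pow_add]; congr 1; omega
      have id1 : (X 0 : MvPowerSeries (Fin (n + 2)) k) ^ a * X 1 ^ 2
          = (X 0 ^ a * (X 1 ^ 2 - X 0 ^ (r + 1) * X 1 - w * X 0 ^ (2 * r + 2))
              + X 0 ^ c * (X 0 ^ t * X 1))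
            + w * (X 0 ^ a * X 0 ^ (2 * r + 2)) := by
        linear_combination (-(X 1 : MvPowerSeries (Fin (n + 2)) k)) * e1
      rw [id1]
      refine Submodule.add_mem_sup
        (Ideal.add_mem _ (Ideal.mul_mem_left _ _ hG) (Ideal.mul_mem_left _ _ hH))
        (Ideal.mul_mem_left _ _ ?_)
      have e2 : (X 0 : MvPowerSeries (Fin (n + 2)) k) ^ a * X 0 ^ (2 * r + 2)
          = X 0 ^ N := by rw [← pow_add]; congr 1; omega
      rw [e2]
      exact Ideal.pow_mem_pow hX0 N
    · -- b ≥ 3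
      obtain ⟨b', rfl⟩ : ∃ b', b = b' + 3 := ⟨b - 3, by omega⟩
      obtain ⟨d, hd⟩ : ∃ d, d + t = a + 2 * r + 2 := ⟨a + 2 * r + 2 - t, by omega⟩
      have e1 : (X 0 : MvPowerSeries (Fin (n + 2)) k) ^ d * X 0 ^ t
          = X 0 ^ a * (X 0 ^ (r + 1) * X 0 ^ (r + 1)) := by
        rw [← pow_add, ← pow_add, ← pow_add]; congr 1; omega
      have id1 : (X 0 : MvPowerSeries (Fin (n + 2)) k) ^ a * X 1 ^ (b' + 3)
          = ((X 0 ^ a * X 1 ^ (b' + 1) + X 0 ^ a * X 0 ^ (r + 1) * X 1 ^ b')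
                * (X 1 ^ 2 - X 0 ^ (r + 1) * X 1 - w * X 0 ^ (2 * r + 2))
              + (X 0 ^ d * X 1 ^ b') * (X 0 ^ t * X 1))
            + (w * (X 0 ^ a * X 0 ^ (2 * r + 2) * X 1 ^ (b' + 1))
              + w * (X 0 ^ a * X 0 ^ (r + 1) * X 0 ^ (2 * r + 2) * X 1 ^ b')) := by
        linear_combination (-((X 1 : MvPowerSeries (Fin (n + 2)) k) ^ (b' + 1))) * e1
      rw [id1]
      refine Submodule.add_mem_sup
        (Ideal.add_mem _ (Ideal.mul_mem_left _ _ hG) (Ideal.mul_mem_left _ _ hH))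
        (Ideal.add_mem _ (Ideal.mul_mem_left _ _ ?_) (Ideal.mul_mem_left _ _ ?_))
      · have e2 : (X 0 : MvPowerSeries (Fin (n + 2)) k) ^ a * X 0 ^ (2 * r + 2)
            * X 1 ^ (b' + 1) = X 0 ^ (a + (2 * r + 2)) * X 1 ^ (b' + 1) := by
          rw [← pow_add]
        rw [e2]
        have hle : nIdeal k (n + 2) ^ (a + (2 * r + 2)) * nIdeal k (n + 2) ^ (b' + 1)
            ≤ nIdeal k (n + 2) ^ N := by
          rw [← pow_add]
          exact le_of_eq (by congr 1; omega)
        exact hle (Ideal.mul_mem_mul (Ideal.pow_mem_pow hX0 _) (Ideal.pow_mem_pow hX1 _))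
      · have e2 : (X 0 : MvPowerSeries (Fin (n + 2)) k) ^ a * X 0 ^ (r + 1)
            * X 0 ^ (2 * r + 2) * X 1 ^ b'
            = X 0 ^ (a + (r + 1) + (2 * r + 2)) * X 1 ^ b' := by
          rw [← pow_add, ← pow_add]
        rw [e2]
        have hle : nIdeal k (n + 2) ^ (a + (r + 1) + (2 * r + 2)) * nIdeal k (n + 2) ^ b'
            ≤ nIdeal k (n + 2) ^ N := by
          rw [← pow_add]
          exact Ideal.pow_le_pow_right (by omega)
        exact hle (Ideal.mul_mem_mul (Ideal.pow_mem_pow hX0 _) (Ideal.pow_mem_pow hX1 _))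
  by_cases hcase : ∃ i j : Fin (n + 2), i < j ∧ (i, j) ≠ (0, 1) ∧ m i ≠ 0 ∧ m j ≠ 0
  · -- divisible by a generator x_i x_j
    obtain ⟨i, j, hij, hij2, hmi, hmj⟩ := hcase
    have hne : i ≠ j := ne_of_lt hij
    have h1 : 1 ≤ m i := Nat.one_le_iff_ne_zero.2 hmi
    have h2 : 1 ≤ m j := Nat.one_le_iff_ne_zero.2 hmj
    have hm : (m - Finsupp.single i 1 - Finsupp.single j 1)
        + (Finsupp.single i 1 + Finsupp.single j 1) = m := by
      ext a
      simp only [Finsupp.coe_add, Finsupp.coe_tsub, Pi.add_apply, Pi.sub_apply,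
        Finsupp.single_apply]
      split_ifs with h3 h4 h5
      · exact absurd (h3.trans h4.symm) hne
      · subst h3; omega
      · subst h5; omega
      · omega
    have hmono : monomial m (1 : k)
        = monomial (m - Finsupp.single i 1 - Finsupp.single j 1) 1 * (X i * X j) := by
      rw [X_def, X_def, monomial_mul_monomial, one_mul, monomial_mul_monomial, one_mul, hm]
    rw [hmono]
    exact Submodule.mem_sup_left (Ideal.mul_mem_left _ _ (hpair i j hij hij2))
  · push_neg at hcase
    by_cases hj : ∃ j : Fin (n + 2), 2 ≤ (j : ℕ) ∧ m j ≠ 0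
    · -- m = single j (r+2), j ≥ 2
      obtain ⟨j, hjv, hmj⟩ := hj
      have hj0 : j ≠ 0 := by
        intro hcon; rw [hcon] at hjv; simp [Fin.val_zero] at hjv
      have hj1 : j ≠ 1 := by
        intro hcon; rw [hcon] at hjv; simp [Fin.val_one] at hjv
      have hzero : ∀ i, i ≠ j → m i = 0 := by
        intro i hij
        rcases lt_or_gt_of_ne hij with h | h
        · by_contra hmi
          exact hmj (hcase i j h (by
            intro hcon
            exact hj1 (congrArg Prod.snd hcon)) hmi)
        · exact hcase j i h (by
            intro hcon
            exact hj0 (congrArg Prod.fst hcon)) hmj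
      have hm : m = Finsupp.single j (m j) := by
        ext a
        rcases eq_or_ne a j with rfl | ha
        · simp
        · rw [Finsupp.single_eq_of_ne' (Ne.symm ha)]
          exact hzero a ha
      obtain ⟨c, hm2⟩ : ∃ c, m = Finsupp.single j c := ⟨m j, hm⟩
      subst hm2
      have hc : c = r + 2 := by
        rwa [Finsupp.sum_single_index rfl] at hdeg
      subst hc
      rw [← X_pow_eq]
      obtain ⟨r', hr'⟩ : ∃ r', r = r' + 1 := ⟨r - 1, by omega⟩
      obtain ⟨s', hs'⟩ : ∃ s', s = s' + 1 := ⟨s - 1, by omega⟩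
      have hj0' : (0 : Fin (n + 2)) < j := by
        rw [Fin.lt_def]
        simp only [Fin.val_zero]
        omega
      have id2 : (X j : MvPowerSeries (Fin (n + 2)) k) ^ (r + 2)
          = X j ^ r * (X j ^ 2 - X 0 ^ s) + (X j ^ r' * X 0 ^ s') * (X 0 * X j) := by
        rw [hr', hs']; ring
      rw [id2]
      refine Submodule.mem_sup_left (Ideal.add_mem _ (Ideal.mul_mem_left _ _ (hsq j hjv))
        (Ideal.mul_mem_left _ _ (hpair 0 j hj0' ?_)))
      intro hcon
      exact hj1 (congrArg Prod.snd hcon)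
    · -- m supported on {0, 1}
      push_neg at hj
      have hm : m = Finsupp.single 0 (m 0) + Finsupp.single 1 (m 1) := by
        ext a
        by_cases ha0 : a = 0
        · subst ha0
          rw [Finsupp.add_apply, Finsupp.single_eq_same, Finsupp.single_eq_of_ne' (Ne.symm h01),
            add_zero]
        · by_cases ha1 : a = 1
          · subst ha1
            rw [Finsupp.add_apply, Finsupp.single_eq_same, Finsupp.single_eq_of_ne' h01,
              zero_add]
          · have hv0 : (a : ℕ) ≠ 0 := fun hv => ha0 (by apply Fin.ext; simp [hv])
            have hv1 : (a : ℕ) ≠ 1 := fun hv => ha1 (by apply Fin.ext; simp [hv])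
            rw [Finsupp.add_apply, Finsupp.single_eq_of_ne' (Ne.symm ha0),
              Finsupp.single_eq_of_ne' (Ne.symm ha1), add_zero]
            exact hj a (by omega)
      obtain ⟨a, b, hm2⟩ : ∃ a b, m = Finsupp.single 0 a + Finsupp.single 1 b :=
        ⟨m 0, m 1, hm⟩
      subst hm2
      have hab : a + b = r + 2 := by
        rwa [Finsupp.sum_add_index' (fun _ => rfl) (fun _ _ _ => rfl),
          Finsupp.sum_single_index rfl, Finsupp.sum_single_index rfl] at hdeg
      have hb2 : 2 ≤ b := by
        rcases Nat.lt_or_ge b 2 with hb | hb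
        · interval_cases b
          · exfalso
            apply hne1
            rw [show a = r + 2 by omega]
            simp
          · exfalso
            apply hne2
            rw [show a = r + 1 by omega]
        · exact hb
      have hmono : monomial (Finsupp.single (0 : Fin (n + 2)) a + Finsupp.single 1 b) (1 : k)
          = X 0 ^ a * X 1 ^ b := by
        rw [X_pow_eq, X_pow_eq, monomial_mul_monomial, one_mul]
      rw [hmono]
      exact key a b hab hb2
end

section
/- Assume s ≥ 2t, let r be an integer with 1 ≤ r ≤ t−2 and 2(r+1) = s−t+1, and let w ∈ R be an invertible power series. If a, b ∈ R satisfy a·x₁^{r+1} x₂ + b·x₁^{s−t+1} ∈ I_{r,w} + n^{3r+2}, then a lies in the ideal (x₁^{t−r−1}) + (x₂,…,x_h) and b lies in the ideal (x₁^r) + (x₂,…,x_h). -/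
noncomputable section
open MvPowerSeries Finsupp

namespace Stmt15Aux

variable {k : Type*} [Field k] {n : ℕ}

/-- total degree of a monomial exponent -/
def deg (d : Fin (n + 2) →₀ ℕ) : ℕ := d.sum fun _ m => m

lemma deg_add (u v : Fin (n + 2) →₀ ℕ) : deg (u + v) = deg u + deg v :=
  Finsupp.sum_add_index' (fun _ => rfl) (fun _ _ _ => rfl)

lemma deg_eq_zero {d : Fin (n + 2) →₀ ℕ} (h : deg d = 0) : d = 0 := by
  ext i
  simp only [Finsupp.coe_zero, Pi.zero_apply]
  by_contra hi
  have hmem : i ∈ d.support := Finsupp.mem_support_iff.mpr hi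
  have hle : d i ≤ deg d := by
    rw [deg, Finsupp.sum]
    exact Finset.single_le_sum (f := fun j => d j) (fun _ _ => Nat.zero_le _) hmem
  omega

/-- monomial exponent `x₁^α x₂^β` -/
def D (n : ℕ) (α β : ℕ) : Fin (n + 2) →₀ ℕ := single 0 α + single 1 β

lemma zero_ne_one' : (0 : Fin (n + 2)) ≠ 1 := by
  simp [Fin.ext_iff]

lemma D_apply0 (α β : ℕ) : D n α β 0 = α := by
  simp [D, Finsupp.single_apply, zero_ne_one'.symm]

lemma D_apply1 (α β : ℕ) : D n α β 1 = β := by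
  simp [D, Finsupp.single_apply, zero_ne_one']

lemma D_apply2 (α β : ℕ) {i : Fin (n + 2)} (h2 : 2 ≤ (i : ℕ)) : D n α β i = 0 := by
  have h0 : (0 : Fin (n + 2)) ≠ i := fun h => by simp [← h] at h2
  have h1 : (1 : Fin (n + 2)) ≠ i := by
    intro h
    rw [← h, Fin.val_one] at h2; omega
  simp [D, Finsupp.single_apply, h0, h1]

lemma deg_D (α β : ℕ) : deg (D n α β) = α + β := by
  rw [D, deg_add]
  simp [deg, Finsupp.sum_single_index]

lemma D_zero (α : ℕ) : D n α 0 = single 0 α := by simp [D]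

lemma D_le {γ δ α β : ℕ} : D n γ δ ≤ D n α β ↔ γ ≤ α ∧ δ ≤ β := by
  rw [Finsupp.le_def]
  constructor
  · intro h
    exact ⟨by simpa [D_apply0] using h 0, by simpa [D_apply1] using h 1⟩
  · rintro ⟨h1, h2⟩ i
    by_cases hi0 : i = 0
    · subst hi0; simpa [D_apply0] using h1
    by_cases hi1 : i = 1
    · subst hi1; simpa [D_apply1] using h2
    have hv : 2 ≤ (i : ℕ) := by
      have hv0 : (i : ℕ) ≠ 0 := fun h => hi0 (Fin.ext (by simp [h]))
      have hv1 : (i : ℕ) ≠ 1 := fun h => hi1 (Fin.ext (by simp [h, Fin.val_one]))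
      omega
    simp [D_apply2 _ _ hv]

lemma D_add (α β γ δ : ℕ) : D n α γ + D n β δ = D n (α + β) (γ + δ) := by
  simp only [D, Finsupp.single_add]
  abel

/-- key coefficient computation -/
lemma coeff_mul_D {α β γ δ : ℕ} (c : MvPowerSeries (Fin (n + 2)) k) (hγ : γ ≤ α) (hδ : δ ≤ β) :
    coeff (D n α β) (c * monomial (D n γ δ) 1) = coeff (D n (α - γ) (β - δ)) c := by
  have h : D n α β = D n (α - γ) (β - δ) + D n γ δ := by
    rw [D_add]; congr 1 <;> omega
  rw [h, coeff_add_mul_monomial, mul_one]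

lemma coeff_mul_D_zero {α β γ δ : ℕ} (c : MvPowerSeries (Fin (n + 2)) k)
    (h : ¬(γ ≤ α ∧ δ ≤ β)) :
    coeff (D n α β) (c * monomial (D n γ δ) 1) = 0 := by
  rw [coeff_mul_monomial, if_neg]
  rw [D_le]; exact h

/-- series whose coefficients vanish in degrees `< N` -/
def lowIdeal (k : Type*) [Field k] (n N : ℕ) : Ideal (MvPowerSeries (Fin (n + 2)) k) where
  carrier := {f | ∀ d, deg d < N → coeff d f = 0}
  add_mem' := by
    intro f g hf hg d hd
    rw [map_add, hf d hd, hg d hd, add_zero]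
  zero_mem' := by intro d _; simp
  smul_mem' := by
    intro c f hf d hd
    rw [smul_eq_mul, coeff_mul]
    refine Finset.sum_eq_zero fun p hp => ?_
    rw [Finset.HasAntidiagonal.mem_antidiagonal] at hp
    have h2 : deg p.2 ≤ deg d := by rw [← hp, deg_add]; omega
    rw [hf p.2 (lt_of_le_of_lt h2 hd), mul_zero]

lemma mem_lowIdeal {N : ℕ} {f : MvPowerSeries (Fin (n + 2)) k} :
    f ∈ lowIdeal k n N ↔ ∀ d, deg d < N → coeff d f = 0 := Iff.rfl

lemma nIdeal_le_lowIdeal : nIdeal k (n + 2) ≤ lowIdeal k n 1 := by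
  rw [nIdeal, Ideal.span_le]
  rintro _ ⟨i, rfl⟩
  rw [SetLike.mem_coe, mem_lowIdeal]
  intro d hd
  have h0 : d = 0 := deg_eq_zero (by omega)
  subst h0
  classical
  rw [coeff_X, if_neg]
  intro h
  have := DFunLike.congr_fun h i
  simp at this

lemma nIdeal_pow_le (N : ℕ) : (nIdeal k (n + 2)) ^ N ≤ lowIdeal k n N := by
  induction N with
  | zero =>
    intro f _
    exact fun d hd => absurd hd (by omega)
  | succ N ih =>
    rw [pow_succ]
    refine Ideal.mul_le.mpr fun f hf g hg => ?_
    rw [mem_lowIdeal]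
    intro d hd
    rw [coeff_mul]
    refine Finset.sum_eq_zero fun p hp => ?_
    rw [Finset.HasAntidiagonal.mem_antidiagonal] at hp
    have hdeg : deg p.1 + deg p.2 = deg d := by rw [← deg_add, hp]
    by_cases h1 : deg p.1 < N
    · rw [mem_lowIdeal.mp (ih hf) p.1 h1, zero_mul]
    · rw [mem_lowIdeal.mp (nIdeal_le_lowIdeal hg) p.2 (by omega), mul_zero]

/-- series whose "pure (x₀,x₁)"-coefficients vanish in bidegrees summing `< s` -/
def pureIdeal (k : Type*) [Field k] (n s : ℕ) : Ideal (MvPowerSeries (Fin (n + 2)) k) where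
  carrier := {f | ∀ d : Fin (n + 2) →₀ ℕ,
    (∀ i : Fin (n + 2), 2 ≤ (i : ℕ) → d i = 0) → d 0 + d 1 < s → coeff d f = 0}
  add_mem' := by
    intro f g hf hg d hd1 hd2
    rw [map_add, hf d hd1 hd2, hg d hd1 hd2, add_zero]
  zero_mem' := by intro d _ _; simp
  smul_mem' := by
    intro c f hf d hd1 hd2
    rw [smul_eq_mul, coeff_mul]
    refine Finset.sum_eq_zero fun p hp => ?_
    rw [Finset.HasAntidiagonal.mem_antidiagonal] at hp
    have happ : ∀ i, p.1 i + p.2 i = d i := by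
      intro i
      rw [← Finsupp.add_apply, hp]
    have h1 : ∀ i : Fin (n + 2), 2 ≤ (i : ℕ) → p.2 i = 0 := by
      intro i hi
      have := happ i
      have := hd1 i hi
      omega
    have h2 : p.2 0 + p.2 1 < s := by
      have := happ 0; have := happ 1; omega
    rw [hf p.2 h1 h2, mul_zero]

lemma mem_pureIdeal {s : ℕ} {f : MvPowerSeries (Fin (n + 2)) k} :
    f ∈ pureIdeal k n s ↔ ∀ d : Fin (n + 2) →₀ ℕ,
      (∀ i : Fin (n + 2), 2 ≤ (i : ℕ) → d i = 0) → d 0 + d 1 < s → coeff d f = 0 := Iff.rfl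

lemma span_le_pureIdeal (s : ℕ) :
    Ideal.span ({f | ∃ i j : Fin (n + 2), i < j ∧ (i, j) ≠ (0, 1) ∧ f = X i * X j} ∪
      {f | ∃ j : Fin (n + 2), 2 ≤ (j : ℕ) ∧
        f = (X j : MvPowerSeries (Fin (n + 2)) k) ^ 2 - X 0 ^ s}) ≤ pureIdeal k n s := by
  classical
  rw [Ideal.span_le]
  rintro f (⟨i, j, hij, hne, rfl⟩ | ⟨j, hj, rfl⟩) <;> rw [SetLike.mem_coe, mem_pureIdeal] <;>
    intro d hpure hdeg
  · have hj2 : 2 ≤ (j : ℕ) := by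
      rcases Nat.lt_or_ge (j : ℕ) 2 with h | h
      · exfalso
        have hij' : (i : ℕ) < (j : ℕ) := hij
        have hj1 : (j : ℕ) = 1 ∧ (i : ℕ) = 0 := by omega
        apply hne
        have hi0 : i = 0 := Fin.ext (by simp [hj1.2])
        have hj01 : j = 1 := Fin.ext (by simp [hj1.1, Fin.val_one])
        rw [hi0, hj01]
      · exact h
    have hijne : i ≠ j := ne_of_lt hij
    rw [X_def, X_def, monomial_mul_monomial, mul_one, coeff_monomial, if_neg]
    intro h
    have := hpure j hj2
    rw [h] at this
    simp [Finsupp.single_apply, hijne] at this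
  · have h1 : d ≠ single j 2 := by
      intro h
      have := hpure j hj
      rw [h] at this
      simp at this
    have h2 : d ≠ single 0 s := by
      intro h
      rw [h] at hdeg
      have e0 : (single (0 : Fin (n + 2)) s) 0 = s := by simp
      have e1 : (single (0 : Fin (n + 2)) s) 1 = 0 := by
        rw [Finsupp.single_apply, if_neg]
        simp [Fin.ext_iff]
      omega
    rw [map_sub, X_pow_eq, X_pow_eq, coeff_monomial, if_neg h1, coeff_monomial, if_neg h2,
      sub_zero]

lemma offIdeal_of_support (g : MvPowerSeries (Fin (n + 2)) k)
    (hg : ∀ d, coeff d g ≠ 0 → ∃ i : Fin (n + 2), i ≠ 0 ∧ d i ≠ 0) :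
    g ∈ offIdeal k n := by
  classical
  suffices h : ∀ M : ℕ, ∀ g : MvPowerSeries (Fin (n + 2)) k,
      (∀ d, coeff d g ≠ 0 → ∃ i : Fin (n + 2), i ≠ 0 ∧ (i : ℕ) ≤ M ∧ d i ≠ 0) →
      g ∈ offIdeal k n by
    refine h (n + 1) g fun d hd => ?_
    obtain ⟨i, hi0, hdi⟩ := hg d hd
    exact ⟨i, hi0, by omega, hdi⟩
  intro M
  induction M with
  | zero =>
    intro g hg'
    have hgz : g = 0 := by
      ext d
      rw [map_zero]
      by_contra hd
      obtain ⟨i, hi0, hile, _⟩ := hg' d hd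
      exact hi0 (Fin.ext (by simp only [Fin.val_zero]; omega))
    rw [hgz]
    exact zero_mem _
  | succ M ih =>
    intro g hg'
    by_cases hM : n + 1 ≤ M
    · refine ih g fun d hd => ?_
      obtain ⟨i, h0, hle, hne⟩ := hg' d hd
      exact ⟨i, h0, by omega, hne⟩
    · set i0 : Fin (n + 2) := ⟨M + 1, by omega⟩ with hi0def
      set ψ : MvPowerSeries (Fin (n + 2)) k := fun d => coeff (d + single i0 1) g with hψ
      set φ : MvPowerSeries (Fin (n + 2)) k :=
        fun d => if d i0 = 0 then coeff d g else 0 with hφ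
      have hdecomp : g = X i0 * ψ + φ := by
        ext d
        rw [map_add]
        by_cases hd : d i0 = 0
        · have h1 : coeff d (X i0 * ψ) = 0 := by
            rw [X_def, coeff_monomial_mul, if_neg]
            · intro hle
              have := Finsupp.single_le_iff.mp hle
              omega
          rw [h1, zero_add]
          show coeff d g = φ d
          rw [hφ]
          simp [hd]
        · have hle : single i0 1 ≤ d := Finsupp.single_le_iff.mpr (by omega)
          have h1 : coeff d (X i0 * ψ) = coeff d g := by
            rw [X_def, coeff_monomial_mul, if_pos hle, one_mul]
            show coeff ((d - single i0 1) + single i0 1) g = coeff d g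
            rw [tsub_add_cancel_of_le hle]
          have h2 : coeff d φ = 0 := by
            show φ d = 0
            rw [hφ]; simp [hd]
          rw [h1, h2, add_zero]
      rw [hdecomp]
      refine add_mem ?_ ?_
      · refine Ideal.mul_mem_right _ _ (Ideal.subset_span ⟨i0, ?_, rfl⟩)
        intro h
        have : (i0 : ℕ) = 0 := by rw [h]; rfl
        simp [hi0def] at this
      · refine ih φ fun d hd => ?_
        have hd0 : d i0 = 0 ∧ coeff d g ≠ 0 := by
          by_cases h : d i0 = 0
          · refine ⟨h, ?_⟩
            intro hz
            apply hd
            show φ d = 0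
            rw [hφ]; simp [h, hz]
          · exfalso; apply hd; show φ d = 0; rw [hφ]; simp [h]
        obtain ⟨i, h0, hle, hne⟩ := hg' d hd0.2
        refine ⟨i, h0, ?_, hne⟩
        have hii0 : i ≠ i0 := fun h => hne (h ▸ hd0.1)
        have : (i : ℕ) ≠ M + 1 := fun hv => hii0 (Fin.ext (by simp [hi0def, hv]))
        omega

lemma mem_span_X0_pow_add_offIdeal (m : ℕ) (c : MvPowerSeries (Fin (n + 2)) k)
    (hc : ∀ i, i < m → coeff (single (0 : Fin (n + 2)) i) c = 0) :
    c ∈ Ideal.span {(X 0 : MvPowerSeries (Fin (n + 2)) k) ^ m} + offIdeal k n := by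
  classical
  set ψ : MvPowerSeries (Fin (n + 2)) k :=
    fun d => coeff (d + single 0 m) c with hψ
  have h1 : (X 0 : MvPowerSeries (Fin (n + 2)) k) ^ m * ψ ∈
      Ideal.span {(X 0 : MvPowerSeries (Fin (n + 2)) k) ^ m} :=
    Ideal.mem_span_singleton.mpr ⟨ψ, rfl⟩
  have hcoeff : ∀ d, coeff d ((X 0 : MvPowerSeries (Fin (n + 2)) k) ^ m * ψ) =
      if m ≤ d 0 then coeff d c else 0 := by
    intro d
    rw [X_pow_eq, coeff_monomial_mul]
    by_cases h : (single (0 : Fin (n + 2)) m) ≤ d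
    · rw [if_pos h, if_pos (Finsupp.single_le_iff.mp h), one_mul]
      show coeff ((d - single 0 m) + single 0 m) c = coeff d c
      rw [tsub_add_cancel_of_le h]
    · rw [if_neg h, if_neg fun hh => h (Finsupp.single_le_iff.mpr hh)]
  have hsplit : c = (X 0 : MvPowerSeries (Fin (n + 2)) k) ^ m * ψ +
      (c - (X 0 : MvPowerSeries (Fin (n + 2)) k) ^ m * ψ) := by ring
  rw [hsplit, Submodule.add_eq_sup]
  refine Submodule.add_mem_sup h1 (offIdeal_of_support _ fun d hd => ?_)
  by_contra hno
  push_neg at hno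
  have hdd : d = single 0 (d 0) := by
    ext i
    by_cases h : i = 0
    · subst h; simp
    · rw [hno i h, Finsupp.single_apply, if_neg (fun hh => h hh.symm)]
  apply hd
  rw [map_sub, hcoeff]
  by_cases h : m ≤ d 0
  · rw [if_pos h, sub_self]
  · rw [if_neg h, sub_zero, hdd]
    exact hc (d 0) (by omega)

end Stmt15Aux

end

open Stmt15Aux Finsupp

open MvPowerSeries in
/-- If `s ≥ 2t`, `1 ≤ r ≤ t - 2`, `2(r+1) = s - t + 1`, `w` is invertible and
`a·x₁^{r+1} x₂ + b·x₁^{s-t+1} ∈ I_{r,w} + n^{3r+2}`, then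
`a ∈ (x₁^{t-r-1}) + (x₂,…,x_h)` and `b ∈ (x₁^r) + (x₂,…,x_h)`. -/
theorem stmt_15 {k : Type*} [Field k] [IsAlgClosed k] [CharZero k] (n s t : ℕ)
    (hst : t + 1 ≤ s) (ht : 3 ≤ t + 1) (h2t : 2 * t ≤ s)
    (r : ℕ) (hr1 : 1 ≤ r) (hr2 : r ≤ t - 2) (hr3 : 2 * (r + 1) = s - t + 1)
    (w : MvPowerSeries (Fin (n + 2)) k) (hw : IsUnit w)
    (a b : MvPowerSeries (Fin (n + 2)) k)
    (hab : a * X 0 ^ (r + 1) * X 1 + b * X 0 ^ (s - t + 1) ∈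
      Ipz k n s t r w + (nIdeal k (n + 2)) ^ (3 * r + 2)) :
    a ∈ Ideal.span {(X 0 : MvPowerSeries (Fin (n + 2)) k) ^ (t - r - 1)} + offIdeal k n ∧
    b ∈ Ideal.span {(X 0 : MvPowerSeries (Fin (n + 2)) k) ^ r} + offIdeal k n := by
  classical
  have ht2 : 2 ≤ t := by omega
  have htr : r + 2 ≤ t := by omega
  have htle : t ≤ 2 * r + 1 := by omega
  have hm : s - t + 1 = 2 * r + 2 := by omega
  have hs3 : 3 * r + 2 < s := by omega
  rw [Submodule.add_eq_sup, Submodule.mem_sup] at hab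
  obtain ⟨P, hP, E, hE, hPE⟩ := hab
  unfold Ipz Iy at hP
  rw [Ideal.span_union, Submodule.mem_sup] at hP
  obtain ⟨P₁, hP₁, P₂, hP₂, hP12⟩ := hP
  rw [Ideal.mem_span_pair] at hP₂
  obtain ⟨f, g, hfg⟩ := hP₂
  have hP₁' : P₁ ∈ pureIdeal k n s := span_le_pureIdeal s hP₁
  have hE' : E ∈ lowIdeal k n (3 * r + 2) := nIdeal_pow_le _ hE
  have heq : a * X 0 ^ (r + 1) * X 1 + b * X 0 ^ (s - t + 1) =
      P₁ + (f * (X 1 ^ 2 - X 0 ^ (r + 1) * X 1 - w * X 0 ^ (s - t + 1)) +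
        g * (X 0 ^ t * X 1)) + E := by
    rw [hfg, hP12, hPE]
  have hX01 : ∀ p : ℕ, (X 0 : MvPowerSeries (Fin (n + 2)) k) ^ p * X 1 =
      monomial (D n p 1) 1 := by
    intro p
    rw [X_pow_eq, X_def, monomial_mul_monomial, mul_one]
    rfl
  have hX0m : ∀ p : ℕ, (X 0 : MvPowerSeries (Fin (n + 2)) k) ^ p =
      monomial (D n p 0) 1 := by
    intro p; rw [X_pow_eq, D_zero]
  have hX12 : (X 1 : MvPowerSeries (Fin (n + 2)) k) ^ 2 = monomial (D n 0 2) 1 := by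
    rw [X_pow_eq]; congr 1; simp [D]
  have hq : f * (X 1 ^ 2 - X 0 ^ (r + 1) * X 1 - w * X 0 ^ (s - t + 1)) =
      f * monomial (D n 0 2) 1 - f * monomial (D n (r + 1) 1) 1 -
      f * w * monomial (D n (2 * r + 2) 0) 1 := by
    rw [hm, mul_sub, mul_sub, hX12, hX01, hX0m, mul_assoc]
  rw [hq, mul_assoc a, hX01 (r + 1), hX01 t, hm, hX0m (2 * r + 2)] at heq
  have hcoeff : ∀ α β : ℕ, α + β < 3 * r + 2 →
      coeff (D n α β) (a * monomial (D n (r + 1) 1) 1) +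
      coeff (D n α β) (b * monomial (D n (2 * r + 2) 0) 1) =
      coeff (D n α β) (f * monomial (D n 0 2) 1) -
      coeff (D n α β) (f * monomial (D n (r + 1) 1) 1) -
      coeff (D n α β) (f * w * monomial (D n (2 * r + 2) 0) 1) +
      coeff (D n α β) (g * monomial (D n t 1) 1) := by
    intro α β hαβ
    have h := congrArg (coeff (D n α β)) heq
    simp only [map_add, map_sub] at h
    rw [mem_pureIdeal.mp hP₁' _ (fun i hi => D_apply2 _ _ hi)
        (by rw [D_apply0, D_apply1]; omega), zero_add,
      mem_lowIdeal.mp hE' _ (by rw [deg_D]; omega), add_zero] at h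
    exact h
  have hA : ∀ j, j ≤ r → coeff (D n j 0) f = 0 := by
    intro j hj
    have h := hcoeff j 2 (by omega)
    have e1 : coeff (D n j 2) (a * monomial (D n (r + 1) 1) 1) = 0 :=
      coeff_mul_D_zero _ (by omega)
    have e2 : coeff (D n j 2) (b * monomial (D n (2 * r + 2) 0) 1) = 0 :=
      coeff_mul_D_zero _ (by omega)
    have e3 : coeff (D n j 2) (f * monomial (D n 0 2) 1) = coeff (D n j 0) f := by
      rw [coeff_mul_D f (by omega) (by omega), Nat.sub_zero, Nat.sub_self]
    have e4 : coeff (D n j 2) (f * monomial (D n (r + 1) 1) 1) = 0 :=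
      coeff_mul_D_zero _ (by omega)
    have e5 : coeff (D n j 2) (f * w * monomial (D n (2 * r + 2) 0) 1) = 0 :=
      coeff_mul_D_zero _ (by omega)
    have e6 : coeff (D n j 2) (g * monomial (D n t 1) 1) = 0 :=
      coeff_mul_D_zero _ (by omega)
    rw [e1, e2, e3, e4, e5, e6] at h
    simpa using h.symm
  have hAa : ∀ i, i < t - r - 1 → coeff (single (0 : Fin (n + 2)) i) a = 0 := by
    intro i hi
    have hi' : i ≤ r - 1 := by omega
    have h := hcoeff (r + 1 + i) 1 (by omega)
    have e1 : coeff (D n (r + 1 + i) 1) (a * monomial (D n (r + 1) 1) 1) =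
        coeff (D n i 0) a := by
      rw [coeff_mul_D a (by omega) (by omega), Nat.add_sub_cancel_left, Nat.sub_self]
    have e2 : coeff (D n (r + 1 + i) 1) (b * monomial (D n (2 * r + 2) 0) 1) = 0 :=
      coeff_mul_D_zero _ (by omega)
    have e3 : coeff (D n (r + 1 + i) 1) (f * monomial (D n 0 2) 1) = 0 :=
      coeff_mul_D_zero _ (by omega)
    have e4 : coeff (D n (r + 1 + i) 1) (f * monomial (D n (r + 1) 1) 1) = 0 := by
      rw [coeff_mul_D f (by omega) (by omega), Nat.add_sub_cancel_left, Nat.sub_self]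
      exact hA i (by omega)
    have e5 : coeff (D n (r + 1 + i) 1) (f * w * monomial (D n (2 * r + 2) 0) 1) = 0 :=
      coeff_mul_D_zero _ (by omega)
    have e6 : coeff (D n (r + 1 + i) 1) (g * monomial (D n t 1) 1) = 0 :=
      coeff_mul_D_zero _ (by omega)
    rw [e1, e2, e3, e4, e5, e6] at h
    rw [← D_zero]
    simpa using h
  have hBb : ∀ j, j < r → coeff (single (0 : Fin (n + 2)) j) b = 0 := by
    intro j hj
    have h := hcoeff (2 * r + 2 + j) 0 (by omega)
    have e1 : coeff (D n (2 * r + 2 + j) 0) (a * monomial (D n (r + 1) 1) 1) = 0 :=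
      coeff_mul_D_zero _ (by omega)
    have e2 : coeff (D n (2 * r + 2 + j) 0) (b * monomial (D n (2 * r + 2) 0) 1) =
        coeff (D n j 0) b := by
      rw [coeff_mul_D b (by omega) (by omega), Nat.add_sub_cancel_left, Nat.sub_self]
    have e3 : coeff (D n (2 * r + 2 + j) 0) (f * monomial (D n 0 2) 1) = 0 :=
      coeff_mul_D_zero _ (by omega)
    have e4 : coeff (D n (2 * r + 2 + j) 0) (f * monomial (D n (r + 1) 1) 1) = 0 :=
      coeff_mul_D_zero _ (by omega)
    have e5 : coeff (D n (2 * r + 2 + j) 0)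
        (f * w * monomial (D n (2 * r + 2) 0) 1) = 0 := by
      rw [coeff_mul_D (f * w) (by omega) (by omega), Nat.add_sub_cancel_left, Nat.sub_self]
      rw [coeff_mul]
      refine Finset.sum_eq_zero fun p hp => ?_
      rw [Finset.HasAntidiagonal.mem_antidiagonal] at hp
      have happ : ∀ i, p.1 i + p.2 i = D n j 0 i := fun i => by
        rw [← Finsupp.add_apply, hp]
      have hp1 : p.1 = single (0 : Fin (n + 2)) (p.1 0) := by
        ext i
        by_cases hi : i = 0
        · subst hi; simp
        · have hD : D n j 0 i = 0 := by
            rw [D_zero, Finsupp.single_apply, if_neg (fun hh => hi hh.symm)]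
          have h2 := happ i
          rw [Finsupp.single_apply, if_neg (fun hh => hi hh.symm)]
          omega
      have hle : p.1 0 ≤ j := by
        have h0 := happ 0
        rw [D_apply0] at h0
        omega
      rw [hp1, ← D_zero, hA (p.1 0) (by omega), zero_mul]
    have e6 : coeff (D n (2 * r + 2 + j) 0) (g * monomial (D n t 1) 1) = 0 :=
      coeff_mul_D_zero _ (by omega)
    rw [e1, e2, e3, e4, e5, e6] at h
    rw [← D_zero]
    simpa using h
  exact ⟨mem_span_X0_pow_add_offIdeal (t - r - 1) a hAa,
    mem_span_X0_pow_add_offIdeal r b hBb⟩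
end

section
/- Assume s ≥ 2t and let r be an integer with 1 ≤ r ≤ t−2 and 2(r+1) = s−t+1. Let z, w ∈ R be invertible power series, and suppose y₁,…,y_h ∈ n generate n and I_{r,z} = φ_y(I_{r,w}), i.e. I_{r,z} is the ideal generated by: y_i y_j for 1 ≤ i < j ≤ h with (i,j) ≠ (1,2); y_j² − y₁^s for 3 ≤ j ≤ h; y₂² − y₁^{r+1} y₂ − φ_y(w)·y₁^{s−t+1}; and y₁^t y₂. Then z − φ_y(w) lies in the ideal (x₁^{t−r−1}) + (x₂,…,x_h). -/
namespace Stmt16Aux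
noncomputable section
open MvPowerSeries Finset

variable {K : Type*} [Field K] {n : ℕ}

/-- exponent `x₀^m x₁^k` -/
def D (n m k : ℕ) : Fin (n+2) →₀ ℕ := Finsupp.single 0 m + Finsupp.single 1 k

lemma D_apply_zero (m k : ℕ) : D n m k 0 = m := by
  simp [D, Finsupp.single_apply, Fin.ext_iff]

lemma D_apply_one (m k : ℕ) : D n m k 1 = k := by
  simp [D, Finsupp.single_apply, Fin.ext_iff]

lemma D_apply_other (m k : ℕ) {j : Fin (n+2)} (h0 : j ≠ 0) (h1 : j ≠ 1) :
    D n m k j = 0 := by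
  simp [D, Finsupp.single_apply_eq_zero, h0.symm, h1.symm, (Ne.symm h0), (Ne.symm h1)]

lemma D_add (m m' k k' : ℕ) : D n m k + D n m' k' = D n (m + m') (k + k') := by
  simp [D, Finsupp.single_add]
  abel

lemma eq_D_of_add_eq {α β : Fin (n+2) →₀ ℕ} {m k : ℕ} (h : α + β = D n m k) :
    α = D n (α 0) (α 1) ∧ β = D n (β 0) (β 1) ∧ α 0 + β 0 = m ∧ α 1 + β 1 = k := by
  have h0 : α 0 + β 0 = m := by
    have := DFunLike.congr_fun h 0
    simpa [D_apply_zero] using this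
  have h1 : α 1 + β 1 = k := by
    have := DFunLike.congr_fun h 1
    simpa [D_apply_one] using this
  refine ⟨?_, ?_, h0, h1⟩
  · ext j
    by_cases hj0 : j = 0
    · simp [hj0, D_apply_zero]
    by_cases hj1 : j = 1
    · simp [hj1, D_apply_one]
    · have := DFunLike.congr_fun h j
      simp only [Finsupp.coe_add, Pi.add_apply, D_apply_other _ _ hj0 hj1] at this
      have : α j = 0 := by omega
      simp [this, D_apply_other _ _ hj0 hj1]
  · ext j
    by_cases hj0 : j = 0
    · simp [hj0, D_apply_zero]
    by_cases hj1 : j = 1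
    · simp [hj1, D_apply_one]
    · have := DFunLike.congr_fun h j
      simp only [Finsupp.coe_add, Pi.add_apply, D_apply_other _ _ hj0 hj1] at this
      have : β j = 0 := by omega
      simp [this, D_apply_other _ _ hj0 hj1]

/-- the `k`-th slice map: coefficient of `x₁^k`, restricted to pure `x₀`-monomials. -/
def lam (k : ℕ) (f : MvPowerSeries (Fin (n+2)) K) : PowerSeries K :=
  PowerSeries.mk fun m => MvPowerSeries.coeff (D n m k) f

lemma coeff_lam (k m : ℕ) (f : MvPowerSeries (Fin (n+2)) K) :
    PowerSeries.coeff m (lam k f) = MvPowerSeries.coeff (D n m k) f :=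
  PowerSeries.coeff_mk _ _

lemma lam_add (k : ℕ) (f g : MvPowerSeries (Fin (n+2)) K) :
    lam k (f + g) = lam k f + lam k g := by
  ext m; simp [coeff_lam]

lemma lam_neg (k : ℕ) (f : MvPowerSeries (Fin (n+2)) K) : lam k (-f) = - lam k f := by
  ext m; simp [coeff_lam]

lemma lam_sub (k : ℕ) (f g : MvPowerSeries (Fin (n+2)) K) :
    lam k (f - g) = lam k f - lam k g := by
  ext m; simp [coeff_lam]

lemma lam_zero (k : ℕ) : lam (n := n) k (0 : MvPowerSeries (Fin (n+2)) K) = 0 := by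
  ext m; simp [coeff_lam]

theorem lam_mul (k : ℕ) (f g : MvPowerSeries (Fin (n+2)) K) :
    lam k (f * g) = ∑ p ∈ antidiagonal k, lam p.1 f * lam p.2 g := by
  ext m
  rw [coeff_lam, MvPowerSeries.coeff_mul, map_sum]
  have : ∀ p ∈ antidiagonal k, (PowerSeries.coeff m) (lam p.1 f * lam p.2 g)
      = ∑ q ∈ antidiagonal m, (MvPowerSeries.coeff (D n q.1 p.1) f) *
          (MvPowerSeries.coeff (D n q.2 p.2) g) := by
    intro p _
    rw [PowerSeries.coeff_mul]
    exact Finset.sum_congr rfl fun q _ => by rw [coeff_lam, coeff_lam]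
  rw [Finset.sum_congr rfl this, ← Finset.sum_product']
  refine Finset.sum_nbij' (fun x => ((x.1 1, x.2 1), (x.1 0, x.2 0)))
    (fun x => (D n x.2.1 x.1.1, D n x.2.2 x.1.2)) ?_ ?_ ?_ ?_ ?_
  · intro a ha
    simp only [Finset.HasAntidiagonal.mem_antidiagonal] at ha
    obtain ⟨-, -, h0, h1⟩ := eq_D_of_add_eq ha
    simp [Finset.mem_product, h0, h1]
  · intro a ha
    simp only [Finset.mem_product, Finset.HasAntidiagonal.mem_antidiagonal] at ha
    simp only [Finset.HasAntidiagonal.mem_antidiagonal, D_add, ha.1, ha.2]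
  · intro a ha
    simp only [Finset.HasAntidiagonal.mem_antidiagonal] at ha
    obtain ⟨h1, h2, -, -⟩ := eq_D_of_add_eq ha
    simp [← h1, ← h2]
  · intro a ha
    simp [D_apply_zero, D_apply_one]
  · intro a ha
    simp only [Finset.HasAntidiagonal.mem_antidiagonal] at ha
    obtain ⟨h1, h2, -, -⟩ := eq_D_of_add_eq ha
    simp only []
    rw [← h1, ← h2]

theorem lam_mul' (k : ℕ) (f g : MvPowerSeries (Fin (n+2)) K) :
    lam k (f * g) = ∑ i ∈ range (k+1), lam i f * lam (k - i) g := by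
  rw [lam_mul, Finset.Nat.sum_antidiagonal_eq_sum_range_succ_mk]

lemma lam_one_zero : lam (n := n) 0 (1 : MvPowerSeries (Fin (n+2)) K) = 1 := by
  ext m
  rw [coeff_lam, MvPowerSeries.coeff_one]
  have : D n m 0 = 0 ↔ m = 0 := by
    constructor
    · intro h; have := DFunLike.congr_fun h 0
      simpa [D_apply_zero] using this
    · intro h; subst h; ext j; by_cases hj0 : j = 0
      · simp [hj0, D_apply_zero]
      · by_cases hj1 : j = 1
        · simp [hj1, D_apply_one]
        · simp [D_apply_other _ _ hj0 hj1]
  simp only [this]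
  rw [PowerSeries.coeff_one]

lemma lam_one_succ (k : ℕ) : lam (n := n) (k+1) (1 : MvPowerSeries (Fin (n+2)) K) = 0 := by
  ext m
  rw [coeff_lam, MvPowerSeries.coeff_one]
  have : D n m (k+1) ≠ 0 := by
    intro h
    have := DFunLike.congr_fun h 1
    simp [D_apply_one] at this
  simp [this]

/-- `lam 0` as a ring hom -/
def lam0 : MvPowerSeries (Fin (n+2)) K →+* PowerSeries K where
  toFun := lam 0
  map_one' := lam_one_zero
  map_mul' := fun f g => by
    show lam 0 (f * g) = lam 0 f * lam 0 g
    rw [lam_mul']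
    simp
  map_zero' := lam_zero 0
  map_add' := lam_add 0

lemma lam0_apply (f : MvPowerSeries (Fin (n+2)) K) : lam0 f = lam 0 f := rfl

end
end Stmt16Aux

namespace Stmt16Aux
noncomputable section
open MvPowerSeries Finset

variable {K : Type*} [Field K] {n : ℕ}

lemma D_eq_single_iff_zero (m k : ℕ) (j : ℕ) :
    D n m k = Finsupp.single (0 : Fin (n+2)) j ↔ (m = j ∧ k = 0) := by
  constructor
  · intro h
    have h0 := DFunLike.congr_fun h (0 : Fin (n+2))
    have h1 := DFunLike.congr_fun h (1 : Fin (n+2))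
    rw [D_apply_zero, Finsupp.single_eq_same] at h0
    rw [D_apply_one, Finsupp.single_eq_of_ne (by simp [Fin.ext_iff])] at h1
    exact ⟨h0, h1⟩
  · rintro ⟨rfl, rfl⟩
    ext i
    by_cases h0 : i = 0
    · subst h0; simp [D_apply_zero, Finsupp.single_apply]
    by_cases h1 : i = 1
    · subst h1
      rw [D_apply_one]
      simp [Finsupp.single_apply, Fin.ext_iff]
    · rw [D_apply_other _ _ h0 h1]
      simp [Finsupp.single_apply, Ne.symm h0]

lemma D_eq_single_one_iff (m k : ℕ) (j : ℕ) :
    D n m k = Finsupp.single (1 : Fin (n+2)) j ↔ (m = 0 ∧ k = j) := by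
  constructor
  · intro h
    have h0 := DFunLike.congr_fun h (0 : Fin (n+2))
    have h1 := DFunLike.congr_fun h (1 : Fin (n+2))
    rw [D_apply_zero, Finsupp.single_eq_of_ne (by simp [Fin.ext_iff])] at h0
    rw [D_apply_one, Finsupp.single_eq_same] at h1
    exact ⟨h0, h1⟩
  · rintro ⟨rfl, rfl⟩
    ext i
    by_cases h0 : i = 0
    · subst h0
      rw [D_apply_zero]
      simp [Finsupp.single_apply, Fin.ext_iff]
    by_cases h1 : i = 1
    · subst h1; simp [D_apply_one, Finsupp.single_apply]
    · rw [D_apply_other _ _ h0 h1]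
      simp [Finsupp.single_apply, Ne.symm h1]

lemma lam_X_other (k : ℕ) {i : Fin (n+2)} (h0 : i ≠ 0) (h1 : i ≠ 1) :
    lam (K := K) k (X i) = 0 := by
  ext m
  rw [coeff_lam, MvPowerSeries.coeff_X]
  have : D n m k ≠ Finsupp.single i 1 := by
    intro h
    have := DFunLike.congr_fun h i
    rw [D_apply_other _ _ h0 h1] at this
    simp [Finsupp.single_apply] at this
  simp [this]

lemma lam0_X0 : lam (n := n) (K := K) 0 (X 0) = PowerSeries.X := by
  ext m
  rw [coeff_lam, MvPowerSeries.coeff_X, PowerSeries.coeff_X]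
  simp only [D_eq_single_iff_zero]
  simp

lemma lam_succ_X0 (k : ℕ) : lam (n := n) (K := K) (k+1) (X 0) = 0 := by
  ext m
  rw [coeff_lam, MvPowerSeries.coeff_X]
  simp only [D_eq_single_iff_zero]
  simp

lemma lam0_X1 : lam (n := n) (K := K) 0 (X 1) = 0 := by
  ext m
  rw [coeff_lam, MvPowerSeries.coeff_X]
  simp only [D_eq_single_one_iff]
  simp

lemma lam1_X1 : lam (n := n) (K := K) 1 (X 1) = 1 := by
  ext m
  rw [coeff_lam, MvPowerSeries.coeff_X]
  simp only [D_eq_single_one_iff]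
  rw [PowerSeries.coeff_one]
  by_cases h : m = 0 <;> simp [h]

lemma lam_X1_of_ne (k : ℕ) (h : k ≠ 1) : lam (n := n) (K := K) k (X 1) = 0 := by
  ext m
  rw [coeff_lam, MvPowerSeries.coeff_X]
  simp only [D_eq_single_one_iff]
  simp [h]

lemma lam0_X0_pow (e : ℕ) : lam (n := n) (K := K) 0 (X 0 ^ e) = PowerSeries.X ^ e := by
  rw [← lam0_apply, map_pow, lam0_apply, lam0_X0]

lemma lam_succ_X0_pow (e : ℕ) : ∀ k, lam (n := n) (K := K) (k+1) (X 0 ^ e) = 0 := by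
  induction e with
  | zero => intro k; simpa using lam_one_succ k
  | succ e ih =>
    intro k
    rw [pow_succ, mul_comm, lam_mul']
    apply Finset.sum_eq_zero
    intro i hi
    rcases Nat.eq_zero_or_pos i with h | h
    · subst h
      rw [Nat.sub_zero, ih k]
      simp
    · have : i = (i - 1) + 1 := by omega
      rw [this, lam_succ_X0]
      simp

lemma lam_mul_X0_pow (k e : ℕ) (f : MvPowerSeries (Fin (n+2)) K) :
    lam k (f * X 0 ^ e) = lam k f * PowerSeries.X ^ e := by
  rw [lam_mul']
  rw [Finset.sum_eq_single k]
  · simp [lam0_X0_pow]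
  · intro i hi hne
    simp only [mem_range] at hi
    have : k - i = (k - i - 1) + 1 := by omega
    rw [this, lam_succ_X0_pow e (k - i - 1)]
    simp
  · intro h
    simp at h

lemma constantCoeff_lam0 (f : MvPowerSeries (Fin (n+2)) K) :
    PowerSeries.constantCoeff (lam 0 f) = MvPowerSeries.constantCoeff f := by
  have : D n 0 0 = 0 := by
    ext i
    by_cases h0 : i = 0
    · simp [h0, D_apply_zero]
    by_cases h1 : i = 1
    · simp [h1, D_apply_one]
    · simp [D_apply_other _ _ h0 h1]
  rw [← PowerSeries.coeff_zero_eq_constantCoeff_apply, coeff_lam, this]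
  rfl

lemma X_dvd_lam0 (f : MvPowerSeries (Fin (n+2)) K)
    (hf : MvPowerSeries.constantCoeff f = 0) :
    PowerSeries.X ∣ lam 0 f := by
  rw [PowerSeries.X_dvd_iff, constantCoeff_lam0, hf]

/-- order bound for slices of powers -/
lemma X_pow_dvd_lam_pow (f : MvPowerSeries (Fin (n+2)) K)
    (hf : MvPowerSeries.constantCoeff f = 0) (j : ℕ) :
    ∀ k, (PowerSeries.X : PowerSeries K) ^ (j - k) ∣ lam k (f ^ j) := by
  induction j with
  | zero =>
    intro k
    simp
  | succ j ih =>
    intro k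
    rw [pow_succ, mul_comm, lam_mul']
    apply Finset.dvd_sum
    intro i hi
    simp only [mem_range] at hi
    rcases Nat.eq_zero_or_pos i with h | h
    · subst h
      have h1 : PowerSeries.X ∣ lam (K := K) (n := n) 0 f := X_dvd_lam0 f hf
      have h2 := ih k
      calc (PowerSeries.X : PowerSeries K) ^ (j + 1 - k)
          ∣ PowerSeries.X ^ (1 + (j - k)) := pow_dvd_pow _ (by omega)
        _ = PowerSeries.X * PowerSeries.X ^ (j - k) := by rw [pow_add, pow_one]
        _ ∣ lam 0 f * lam (k - 0) (f ^ j) := mul_dvd_mul h1 (by simpa using h2)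
    · have h2 := ih (k - i)
      have : (PowerSeries.X : PowerSeries K) ^ (j + 1 - k) ∣ PowerSeries.X ^ (j - (k - i)) :=
        pow_dvd_pow _ (by omega)
      exact Dvd.dvd.mul_left (dvd_trans this h2) _

end
end Stmt16Aux

namespace Stmt16Aux
noncomputable section
open MvPowerSeries Finset

variable {K : Type*} [Field K] {n : ℕ}

local notation "XX" => (PowerSeries.X : PowerSeries K)

lemma lam0_mul (f g : MvPowerSeries (Fin (n+2)) K) :
    lam 0 (f * g) = lam 0 f * lam 0 g := by
  rw [lam_mul']
  simp

lemma lam1_mul (f g : MvPowerSeries (Fin (n+2)) K) :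
    lam 1 (f * g) = lam 0 f * lam 1 g + lam 1 f * lam 0 g := by
  rw [lam_mul']
  rw [Finset.sum_range_succ, Finset.sum_range_succ]
  norm_num

lemma lam2_mul (f g : MvPowerSeries (Fin (n+2)) K) :
    lam 2 (f * g) = lam 0 f * lam 2 g + lam 1 f * lam 1 g + lam 2 f * lam 0 g := by
  rw [lam_mul']
  rw [Finset.sum_range_succ, Finset.sum_range_succ, Finset.sum_range_succ]
  norm_num

lemma lam3_mul (f g : MvPowerSeries (Fin (n+2)) K) :
    lam 3 (f * g) = lam 0 f * lam 3 g + lam 1 f * lam 2 g + lam 2 f * lam 1 g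
      + lam 3 f * lam 0 g := by
  rw [lam_mul']
  rw [Finset.sum_range_succ, Finset.sum_range_succ, Finset.sum_range_succ,
    Finset.sum_range_succ]
  norm_num

lemma lam_mul_X_other (k : ℕ) (f : MvPowerSeries (Fin (n+2)) K) {j : Fin (n+2)}
    (h0 : j ≠ 0) (h1 : j ≠ 1) : lam k (f * X j) = 0 := by
  rw [lam_mul']
  apply Finset.sum_eq_zero
  intro i _
  rw [lam_X_other _ h0 h1]
  simp

/-- The structured membership consequence: the `x₁^k`-slices (`k ≤ 3`) of any element of the
ideal `I` have the specific shape coming from multiples of the special quadric. -/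
def PP (s t r : ℕ) (Z : PowerSeries K) (f : MvPowerSeries (Fin (n+2)) K) : Prop :=
  ∃ A₀ A₁ A₂ : PowerSeries K,
    ((PowerSeries.X : PowerSeries K) ^ s ∣ lam 0 f + A₀ * Z * PowerSeries.X ^ (2*r+2)) ∧
    (PowerSeries.X ^ t ∣ lam 1 f + A₀ * PowerSeries.X ^ (r+1)) ∧
    (PowerSeries.X ^ t ∣ lam 2 f - A₀ + A₁ * PowerSeries.X ^ (r+1)) ∧
    (PowerSeries.X ^ t ∣ lam 3 f - A₁ + A₂ * PowerSeries.X ^ (r+1))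

lemma PP_zero (s t r : ℕ) (Z : PowerSeries K) : PP (n := n) s t r Z 0 := by
  refine ⟨0, 0, 0, ?_, ?_, ?_, ?_⟩ <;> simp [lam_zero]

lemma PP_add {s t r : ℕ} {Z : PowerSeries K} {f g : MvPowerSeries (Fin (n+2)) K}
    (hf : PP s t r Z f) (hg : PP s t r Z g) : PP s t r Z (f + g) := by
  obtain ⟨A₀, A₁, A₂, h0, h1, h2, h3⟩ := hf
  obtain ⟨B₀, B₁, B₂, k0, k1, k2, k3⟩ := hg
  refine ⟨A₀ + B₀, A₁ + B₁, A₂ + B₂, ?_, ?_, ?_, ?_⟩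
  · have := dvd_add h0 k0
    rw [lam_add]; convert this using 1; ring
  · have := dvd_add h1 k1
    rw [lam_add]; convert this using 1; ring
  · have := dvd_add h2 k2
    rw [lam_add]; convert this using 1; ring
  · have := dvd_add h3 k3
    rw [lam_add]; convert this using 1; ring

lemma PP_mul {s t r : ℕ} (hts : t ≤ s) (ht2r : t ≤ 2*r+2) {Z : PowerSeries K}
    {g : MvPowerSeries (Fin (n+2)) K} (hg : PP s t r Z g)
    (c : MvPowerSeries (Fin (n+2)) K) : PP s t r Z (c * g) := by
  obtain ⟨A₀, A₁, A₂, h0, h1, h2, h3⟩ := hg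
  obtain ⟨e₀, he₀⟩ := h0
  obtain ⟨e₁, he₁⟩ := h1
  obtain ⟨e₂, he₂⟩ := h2
  obtain ⟨e₃, he₃⟩ := h3
  have hL0 : lam 0 g = XX ^ s * e₀ - A₀ * Z * XX ^ (2*r+2) := by
    rw [← he₀]; ring
  have hL1 : lam 1 g = XX ^ t * e₁ - A₀ * XX ^ (r+1) := by
    rw [← he₁]; ring
  have hL2 : lam 2 g = XX ^ t * e₂ + A₀ - A₁ * XX ^ (r+1) := by
    rw [← he₂]; ring
  have hL3 : lam 3 g = XX ^ t * e₃ + A₁ - A₂ * XX ^ (r+1) := by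
    rw [← he₃]; ring
  set c₀ := lam (n := n) 0 c
  set c₁ := lam (n := n) 1 c
  set c₂ := lam (n := n) 2 c
  set c₃ := lam (n := n) 3 c
  have dts : XX ^ t ∣ XX ^ s := pow_dvd_pow _ hts
  have dt2r : XX ^ t ∣ XX ^ (2*r+2) := pow_dvd_pow _ ht2r
  refine ⟨c₀ * A₀, c₀ * A₁ + c₁ * A₀, c₀ * A₂ + c₁ * A₁ + c₂ * A₀, ?_, ?_, ?_, ?_⟩
  · have : lam 0 (c * g) + (c₀ * A₀) * Z * XX ^ (2*r+2) = c₀ * (XX ^ s * e₀) := by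
      rw [lam0_mul, hL0]
      ring
    rw [this]
    exact Dvd.dvd.mul_left (pow_dvd_pow _ le_rfl |>.trans (dvd_mul_right _ _)) c₀
  · have : lam 1 (c * g) + (c₀ * A₀) * XX ^ (r+1)
        = c₀ * (XX ^ t * e₁) + c₁ * (XX ^ s * e₀) - c₁ * (A₀ * Z * XX ^ (2*r+2)) := by
      rw [lam1_mul, hL0, hL1]; ring
    rw [this]
    refine dvd_sub (dvd_add ?_ ?_) ?_
    · exact (dvd_mul_right _ _).mul_left c₀
    · exact ((dts.trans (dvd_mul_right _ _))).mul_left c₁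
    · exact ((dt2r.mul_left _)).mul_left c₁
  · have : lam 2 (c * g) - (c₀ * A₀) + (c₀ * A₁ + c₁ * A₀) * XX ^ (r+1)
        = c₀ * (XX ^ t * e₂) + c₁ * (XX ^ t * e₁) + c₂ * (XX ^ s * e₀)
          - c₂ * (A₀ * Z * XX ^ (2*r+2)) := by
      rw [lam2_mul, hL0, hL1, hL2]; ring
    rw [this]
    refine dvd_sub (dvd_add (dvd_add ?_ ?_) ?_) ?_
    · exact (dvd_mul_right _ _).mul_left c₀
    · exact (dvd_mul_right _ _).mul_left c₁
    · exact ((dts.trans (dvd_mul_right _ _))).mul_left c₂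
    · exact ((dt2r.mul_left _)).mul_left c₂
  · have : lam 3 (c * g) - (c₀ * A₁ + c₁ * A₀) + (c₀ * A₂ + c₁ * A₁ + c₂ * A₀) * XX ^ (r+1)
        = c₀ * (XX ^ t * e₃) + c₁ * (XX ^ t * e₂) + c₂ * (XX ^ t * e₁) + c₃ * (XX ^ s * e₀)
          - c₃ * (A₀ * Z * XX ^ (2*r+2)) := by
      rw [lam3_mul, hL0, hL1, hL2, hL3]; ring
    rw [this]
    refine dvd_sub (dvd_add (dvd_add (dvd_add ?_ ?_) ?_) ?_) ?_
    · exact (dvd_mul_right _ _).mul_left c₀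
    · exact (dvd_mul_right _ _).mul_left c₁
    · exact (dvd_mul_right _ _).mul_left c₂
    · exact ((dts.trans (dvd_mul_right _ _))).mul_left c₃
    · exact ((dt2r.mul_left _)).mul_left c₃

end
end Stmt16Aux

namespace Stmt16Aux
noncomputable section
open MvPowerSeries Finset

variable {K : Type*} [Field K] {n : ℕ}

local notation "XX" => (PowerSeries.X : PowerSeries K)

lemma PP_gen_prod {s t r : ℕ} (Z : PowerSeries K) {i j : Fin (n+2)}
    (hij : i < j) (hne : (i, j) ≠ (0, 1)) : PP s t r Z (X i * X j) := by
  have hj0 : j ≠ 0 := by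
    intro h
    subst h
    exact absurd hij (by simp [Fin.lt_def])
  have hj1 : j ≠ 1 := by
    intro h
    subst h
    apply hne
    have : i = 0 := by
      have := hij
      rw [Fin.lt_def] at this
      have h1 : (1 : Fin (n+2)).val = 1 := rfl
      rw [h1] at this
      have : i.val = 0 := by omega
      exact Fin.ext this
    rw [this]
  refine ⟨0, 0, 0, ?_, ?_, ?_, ?_⟩ <;>
    simp [lam_mul_X_other _ _ hj0 hj1]

lemma PP_gen_sq {s t r : ℕ} (Z : PowerSeries K) {j : Fin (n+2)} (hj : 2 ≤ (j : ℕ)) :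
    PP s t r Z ((X j) ^ 2 - (X 0) ^ s) := by
  have hj0 : j ≠ 0 := by
    intro h; subst h; simp at hj
  have hj1 : j ≠ 1 := by
    intro h; subst h
    have : ((1 : Fin (n+2)) : ℕ) = 1 := rfl
    omega
  have hsq : ∀ k, lam (K := K) k ((X j) ^ 2) = 0 := by
    intro k
    rw [pow_two]
    exact lam_mul_X_other _ _ hj0 hj1
  refine ⟨0, 0, 0, ?_, ?_, ?_, ?_⟩
  · rw [lam_sub, hsq, lam0_X0_pow]
    simp
  · rw [lam_sub, hsq, lam_succ_X0_pow s 0]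
    simp
  · rw [lam_sub, hsq, lam_succ_X0_pow s 1]
    simp
  · rw [lam_sub, hsq, lam_succ_X0_pow s 2]
    simp

lemma lam_X1_sq (k : ℕ) : lam (n := n) (K := K) k ((X 1) ^ 2)
    = if k = 2 then 1 else 0 := by
  rw [pow_two, lam_mul']
  rcases k with _ | _ | _ | k
  · simp [lam0_X1]
  · rw [Finset.sum_range_succ, Finset.sum_range_succ]
    norm_num [lam0_X1, lam1_X1]
  · rw [Finset.sum_range_succ, Finset.sum_range_succ, Finset.sum_range_succ]
    norm_num [lam0_X1, lam1_X1]
  · apply Finset.sum_eq_zero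
    intro i hi
    simp only [mem_range] at hi
    by_cases h1 : i = 1
    · subst h1
      rw [lam_X1_of_ne (k + 3 - 1) (by omega)]
      simp
    · rw [lam_X1_of_ne i h1]
      simp

lemma lam_X0_pow_mul_X1 (e k : ℕ) :
    lam (n := n) (K := K) k ((X 0) ^ e * X 1) = if k = 1 then XX ^ e else 0 := by
  rw [mul_comm, lam_mul_X0_pow]
  by_cases h : k = 1
  · subst h; rw [lam1_X1]; simp
  · rw [lam_X1_of_ne k h]; simp [h]

lemma lam_X1_sq' (k : ℕ) (hk : k ≠ 2) : lam (n := n) (K := K) k ((X 1) ^ 2) = 0 := by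
  rw [lam_X1_sq]; simp [hk]

lemma lam_X1_sq2 : lam (n := n) (K := K) 2 ((X 1) ^ 2) = 1 := by
  rw [lam_X1_sq]; simp

lemma lam_X0_pow_mul_X1' (e k : ℕ) (hk : k ≠ 1) :
    lam (n := n) (K := K) k ((X 0) ^ e * X 1) = 0 := by
  rw [lam_X0_pow_mul_X1]; simp [hk]

lemma lam_X0_pow_mul_X1_one (e : ℕ) :
    lam (n := n) (K := K) 1 ((X 0) ^ e * X 1) = XX ^ e := by
  rw [lam_X0_pow_mul_X1]; simp

/-- the quadric generator satisfies PP, with witness (1,0,0) -/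
lemma PP_gen_G {s t r : ℕ} (ht2r : t ≤ 2*r+2) (hts : t ≤ s) (z : MvPowerSeries (Fin (n+2)) K) :
    PP s t r (lam 0 z) ((X 1) ^ 2 - (X 0) ^ (r+1) * X 1 - z * (X 0) ^ (2*r+2)) := by
  have hz : ∀ k, lam (K := K) k (z * (X 0) ^ (2*r+2)) = lam k z * XX ^ (2*r+2) :=
    fun k => lam_mul_X0_pow k _ z
  have dt2r : XX ^ t ∣ XX ^ (2*r+2) := pow_dvd_pow _ ht2r
  refine ⟨1, 0, 0, ?_, ?_, ?_, ?_⟩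
  · rw [lam_sub, lam_sub, hz, lam_X1_sq' 0 (by norm_num),
      lam_X0_pow_mul_X1' _ 0 (by norm_num)]
    have h : (0:PowerSeries K) - 0 - lam 0 z * XX ^ (2*r+2) + 1 * lam 0 z * XX ^ (2*r+2)
        = 0 := by ring
    rw [h]
    exact dvd_zero _
  · rw [lam_sub, lam_sub, hz, lam_X1_sq' 1 (by norm_num), lam_X0_pow_mul_X1_one]
    have h : (0:PowerSeries K) - XX ^ (r+1) - lam 1 z * XX ^ (2*r+2) + 1 * XX ^ (r+1)
        = -(lam 1 z * XX ^ (2*r+2)) := by ring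
    rw [h]
    exact (dt2r.mul_left _).neg_right
  · rw [lam_sub, lam_sub, hz, lam_X1_sq2, lam_X0_pow_mul_X1' _ 2 (by norm_num)]
    have h : (1:PowerSeries K) - 0 - lam 2 z * XX ^ (2*r+2) - 1 + 0 * XX ^ (r+1)
        = -(lam 2 z * XX ^ (2*r+2)) := by ring
    rw [h]
    exact (dt2r.mul_left _).neg_right
  · rw [lam_sub, lam_sub, hz, lam_X1_sq' 3 (by norm_num),
      lam_X0_pow_mul_X1' _ 3 (by norm_num)]
    have h : (0:PowerSeries K) - 0 - lam 3 z * XX ^ (2*r+2) - 0 + 0 * XX ^ (r+1)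
        = -(lam 3 z * XX ^ (2*r+2)) := by ring
    rw [h]
    exact (dt2r.mul_left _).neg_right

lemma PP_gen_t {s t r : ℕ} (Z : PowerSeries K) :
    PP (n := n) s t r Z ((X 0) ^ t * X 1) := by
  refine ⟨0, 0, 0, ?_, ?_, ?_, ?_⟩
  · rw [lam_X0_pow_mul_X1' _ 0 (by norm_num)]
    simp
  · rw [lam_X0_pow_mul_X1_one]
    simp
  · rw [lam_X0_pow_mul_X1' _ 2 (by norm_num)]
    simp
  · rw [lam_X0_pow_mul_X1' _ 3 (by norm_num)]
    simp

end
end Stmt16Aux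

namespace Stmt16Aux
noncomputable section
open MvPowerSeries Finset

variable {K : Type*} [Field K] {n : ℕ}

local notation "XX" => (PowerSeries.X : PowerSeries K)

lemma PP_of_mem_I {s t r : ℕ} (hts : t ≤ s) (ht2r : t ≤ 2*r+2) (hE : s - t + 1 = 2*r+2)
    (z : MvPowerSeries (Fin (n+2)) K) {f : MvPowerSeries (Fin (n+2)) K}
    (hf : f ∈ Ipz K n s t r z) :
    PP s t r (lam 0 z) f := by
  rw [Ipz, Iy] at hf
  refine Submodule.span_induction (p := fun x _ => PP s t r (lam 0 z) x) ?_ ?_ ?_ ?_ hf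
  · rintro x hx
    rcases hx with (hx | hx) | hx
    · obtain ⟨i, j, hij, hne, rfl⟩ := hx
      exact PP_gen_prod _ hij hne
    · obtain ⟨j, hj, rfl⟩ := hx
      exact PP_gen_sq _ hj
    · rcases hx with rfl | hx
      · rw [hE]
        exact PP_gen_G ht2r hts z
      · rw [Set.mem_singleton_iff] at hx
        subst hx
        exact PP_gen_t _
  · exact PP_zero s t r _
  · intro x y _ _ hx hy
    exact PP_add hx hy
  · intro a x _ hx
    rw [smul_eq_mul]
    exact PP_mul hts ht2r hx a

/-- cancel a power of `X` -/
lemma X_pow_cancel {a : ℕ} {f g : PowerSeries K}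
    (h : XX ^ a * f = XX ^ a * g) : f = g :=
  mul_left_cancel₀ (pow_ne_zero _ PowerSeries.X_ne_zero) h

lemma X_pow_dvd_of_mul {a b : ℕ} {f : PowerSeries K}
    (h : XX ^ (a + b) ∣ XX ^ a * f) : XX ^ b ∣ f := by
  obtain ⟨g, hg⟩ := h
  rw [pow_add, mul_assoc] at hg
  exact ⟨g, X_pow_cancel (a := a) hg⟩

lemma X_pow_dvd_of_unit_mul {m : ℕ} {u f : PowerSeries K} (hu : IsUnit u)
    (h : XX ^ m ∣ u * f) : XX ^ m ∣ f := by
  obtain ⟨v, hv⟩ := hu.exists_left_inv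
  obtain ⟨g, hg⟩ := h
  refine ⟨v * g, ?_⟩
  calc f = (v * u) * f := by rw [hv, one_mul]
    _ = v * (u * f) := by ring
    _ = v * (XX ^ m * g) := by rw [hg]
    _ = XX ^ m * (v * g) := by ring

lemma isUnit_lam0 {f : MvPowerSeries (Fin (n+2)) K} (hf : IsUnit f) :
    IsUnit (lam 0 f) := by
  rw [PowerSeries.isUnit_iff_constantCoeff, constantCoeff_lam0]
  exact MvPowerSeries.isUnit_constantCoeff f hf

lemma coeff1_mul (f g : PowerSeries K) :
    PowerSeries.coeff 1 (f * g) = PowerSeries.coeff 0 f * PowerSeries.coeff 1 g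
      + PowerSeries.coeff 1 f * PowerSeries.coeff 0 g := by
  rw [PowerSeries.coeff_mul, Finset.Nat.sum_antidiagonal_eq_sum_range_succ_mk,
    Finset.sum_range_succ, Finset.sum_range_succ]
  norm_num

lemma coeff2_mul (f g : PowerSeries K) :
    PowerSeries.coeff 2 (f * g) = PowerSeries.coeff 0 f * PowerSeries.coeff 2 g
      + PowerSeries.coeff 1 f * PowerSeries.coeff 1 g
      + PowerSeries.coeff 2 f * PowerSeries.coeff 0 g := by
  rw [PowerSeries.coeff_mul, Finset.Nat.sum_antidiagonal_eq_sum_range_succ_mk,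
    Finset.sum_range_succ, Finset.sum_range_succ, Finset.sum_range_succ]
  norm_num

lemma coeff_zero_of_X_pow_dvd {m i : ℕ} {f : PowerSeries K} (h : XX ^ m ∣ f) (hi : i < m) :
    PowerSeries.coeff i f = 0 := by
  rw [PowerSeries.X_pow_dvd_iff] at h
  exact h i hi

end
end Stmt16Aux

namespace Stmt16Aux
noncomputable section
open MvPowerSeries Finset Classical

variable {K : Type*} [Field K] {n : ℕ}

local notation "XX" => (PowerSeries.X : PowerSeries K)

/-- pure-`x₀` support test -/
def offSupp (d : Fin (n+2) →₀ ℕ) : Prop := ∀ i : Fin (n+2), i ≠ 0 → d i = 0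

/-- embedding of a one-variable series as a pure-`x₀` multivariate series -/
def emb (ρ : PowerSeries K) : MvPowerSeries (Fin (n+2)) K :=
  fun d => if offSupp d then PowerSeries.coeff (d 0) ρ else 0

lemma coeff_emb (ρ : PowerSeries K) (d : Fin (n+2) →₀ ℕ) :
    MvPowerSeries.coeff d (emb (n := n) ρ)
      = if offSupp d then PowerSeries.coeff (d 0) ρ else 0 :=
  rfl

lemma eq_D_of_offSupp {d : Fin (n+2) →₀ ℕ} (h : offSupp d) : d = D n (d 0) 0 := by
  ext i
  by_cases h0 : i = 0
  · subst h0; rw [D_apply_zero]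
  by_cases h1 : i = 1
  · subst h1
    rw [D_apply_one]
    exact h _ (by simp [Fin.ext_iff])
  · rw [D_apply_other _ _ h0 h1]
    exact h _ h0

lemma lam0_emb_coeff (f : MvPowerSeries (Fin (n+2)) K) (d : Fin (n+2) →₀ ℕ)
    (h : offSupp d) :
    MvPowerSeries.coeff d (emb (lam 0 f)) = MvPowerSeries.coeff d f := by
  rw [coeff_emb, if_pos h, coeff_lam]
  exact congrArg (fun e => MvPowerSeries.coeff e f) (eq_D_of_offSupp h).symm

lemma emb_X_pow_mul (m : ℕ) (g : PowerSeries K) :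
    emb (n := n) (XX ^ m * g) = (X 0 : MvPowerSeries (Fin (n+2)) K) ^ m * emb g := by
  ext d
  rw [MvPowerSeries.X_pow_eq, MvPowerSeries.coeff_monomial_mul, coeff_emb,
    PowerSeries.coeff_X_pow_mul']
  by_cases hoff : offSupp d
  · by_cases hm : m ≤ d 0
    · have hle : Finsupp.single (0 : Fin (n+2)) m ≤ d := by
        rw [Finsupp.le_iff]
        intro i hi
        rcases eq_or_ne i 0 with rfl | hne
        · simpa using hm
        · simp [Finsupp.single_eq_of_ne' (Ne.symm hne)]
      rw [if_pos hoff, if_pos hm, if_pos hle, one_mul, coeff_emb]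
      have hoff' : offSupp (d - Finsupp.single (0 : Fin (n+2)) m) := by
        intro i hi
        rw [Finsupp.tsub_apply, hoff i hi, Finsupp.single_eq_of_ne' (Ne.symm hi)]
        rfl
      have h0 : (d - Finsupp.single (0 : Fin (n+2)) m) 0 = d 0 - m := by
        rw [Finsupp.tsub_apply, Finsupp.single_eq_same]
      rw [if_pos hoff', h0]
    · rw [if_pos hoff, if_neg hm, if_neg]
      intro hle
      exact hm (by simpa using (Finsupp.le_def.mp hle) 0)
  · rw [if_neg hoff]
    by_cases hle : Finsupp.single (0 : Fin (n+2)) m ≤ d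
    · rw [if_pos hle, one_mul, coeff_emb, if_neg]
      · intro hoff'
        apply hoff
        intro i hi
        have := hoff' i hi
        rwa [Finsupp.tsub_apply, Finsupp.single_eq_of_ne' (Ne.symm hi), Nat.sub_zero] at this
    · rw [if_neg hle]

lemma mem_offIdeal_of_offSupp_coeff_zero {g : MvPowerSeries (Fin (n+2)) K}
    (h : ∀ d : Fin (n+2) →₀ ℕ, offSupp d → MvPowerSeries.coeff d g = 0) :
    g ∈ offIdeal K n := by
  classical
  -- write g = ∑_{i ≠ 0} X i * gI i  with gI i supported on monomials whose least
  -- nonzero index (≠ 0) is i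
  set gI : Fin (n+2) → MvPowerSeries (Fin (n+2)) K := fun i =>
    fun e => if (∀ j : Fin (n+2), j ≠ 0 → j < i → e j = 0)
      then MvPowerSeries.coeff (e + Finsupp.single i 1) g else 0 with hgI
  have key : g = ∑ i ∈ Finset.univ.filter (fun i : Fin (n+2) => i ≠ 0), X i * gI i := by
    ext d
    rw [map_sum]
    have hterm : ∀ i : Fin (n+2), i ≠ 0 →
        MvPowerSeries.coeff d (X i * gI i)
          = if (1 ≤ d i ∧ ∀ j : Fin (n+2), j ≠ 0 → j < i → d j = 0)
              then MvPowerSeries.coeff d g else 0 := by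
      intro i hi
      rw [MvPowerSeries.X_def, MvPowerSeries.coeff_monomial_mul]
      by_cases hdi : Finsupp.single i 1 ≤ d
      · have hdi' : 1 ≤ d i := by simpa using (Finsupp.le_def.mp hdi) i
        rw [if_pos hdi, one_mul]
        set e := d - Finsupp.single i 1 with he
        have hre : e + Finsupp.single i 1 = d := by
          ext j
          rcases eq_or_ne j i with rfl | hne
          · simp only [he, Finsupp.coe_add, Pi.add_apply, Finsupp.tsub_apply,
              Finsupp.single_eq_same]
            omega
          · simp [he, Finsupp.tsub_apply, Finsupp.single_eq_of_ne' (Ne.symm hne)]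
        have hej : ∀ j : Fin (n+2), j ≠ i → e j = d j := by
          intro j hj
          rw [he, Finsupp.tsub_apply, Finsupp.single_eq_of_ne' (Ne.symm hj), Nat.sub_zero]
        have hcond : (∀ j : Fin (n+2), j ≠ 0 → j < i → e j = 0)
            ↔ (∀ j : Fin (n+2), j ≠ 0 → j < i → d j = 0) := by
          constructor <;> intro hc j hj0 hji <;> have h2 := hc j hj0 hji <;>
            [skip; skip] <;> rw [hej j (ne_of_lt hji)] at * <;> omega
        show (if (∀ j : Fin (n+2), j ≠ 0 → j < i → e j = 0)
            then MvPowerSeries.coeff (e + Finsupp.single i 1) g else 0) = _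
        by_cases hc : ∀ j : Fin (n+2), j ≠ 0 → j < i → d j = 0
        · rw [if_pos (hcond.mpr hc), if_pos ⟨hdi', hc⟩, hre]
        · rw [if_neg (fun hcc => hc (hcond.mp hcc)), if_neg (fun hcc => hc hcc.2)]
      · have hdi' : ¬ (1 ≤ d i) := by
          intro hh
          apply hdi
          rw [Finsupp.le_def]
          intro j
          rcases eq_or_ne j i with rfl | hne
          · simpa using hh
          · simp [Finsupp.single_eq_of_ne' (Ne.symm hne)]
        rw [if_neg hdi, if_neg (fun hcc => hdi' hcc.1)]
    rw [Finset.sum_congr rfl (fun i hi => hterm i (by simpa using hi))]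
    by_cases hex : ∃ i : Fin (n+2), i ≠ 0 ∧ d i ≠ 0
    · -- least such index
      set S : Finset (Fin (n+2)) := Finset.univ.filter (fun i => i ≠ 0 ∧ d i ≠ 0) with hS
      have hSne : S.Nonempty := by
        obtain ⟨i, hi1, hi2⟩ := hex
        exact ⟨i, by simp [hS, hi1, hi2]⟩
      set i₀ := S.min' hSne with hi₀
      have hi₀mem : i₀ ∈ S := S.min'_mem hSne
      have hi₀ne : i₀ ≠ 0 := by
        have := hi₀mem
        simp [hS] at this
        exact this.1
      have hi₀pos : d i₀ ≠ 0 := by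
        have := hi₀mem
        simp [hS] at this
        exact this.2
      rw [Finset.sum_eq_single i₀]
      · rw [if_pos]
        constructor
        · omega
        · intro j hj0 hji
          by_contra hdj
          have : j ∈ S := by simp [hS, hj0, hdj]
          exact absurd (S.min'_le j this) (not_le.mpr hji)
      · intro i hi hine
        simp only [Finset.mem_filter] at hi
        rw [if_neg]
        rintro ⟨hd1, hall⟩
        have himem : i ∈ S := by
          simp [hS, hi.2]
          omega
        have : i₀ ≤ i := S.min'_le i himem
        rcases lt_or_eq_of_le this with hlt | heq
        · exact hi₀pos (hall i₀ hi₀ne hlt)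
        · exact hine heq.symm
      · intro habs
        exact absurd (by simp [hi₀ne] : i₀ ∈ Finset.univ.filter (fun i : Fin (n+2) => i ≠ 0))
          habs
    · push_neg at hex
      have hoff : offSupp d := by
        intro i hi
        exact hex i hi
      rw [h d hoff]
      apply (Finset.sum_eq_zero _).symm
      intro i hi
      rw [if_neg]
      rintro ⟨hd1, -⟩
      have := hex i (by simpa using hi)
      omega
  rw [key]
  apply Ideal.sum_mem
  intro i hi
  have : X i ∈ {f : MvPowerSeries (Fin (n+2)) K | ∃ i : Fin (n+2), i ≠ 0 ∧ f = X i} :=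
    ⟨i, by simpa using hi, rfl⟩
  exact Ideal.mul_mem_right _ _ (Ideal.subset_span this)

/-- final transfer: if the pure part of `f` is divisible by `X^T`, then
`f ∈ (X₀^T) + offIdeal`. -/
lemma mem_target_of_dvd {T : ℕ} {f : MvPowerSeries (Fin (n+2)) K}
    (h : XX ^ T ∣ lam 0 f) :
    f ∈ Ideal.span {(X 0 : MvPowerSeries (Fin (n+2)) K) ^ T} + offIdeal K n := by
  obtain ⟨g, hg⟩ := h
  have h1 : emb (lam 0 f) ∈ Ideal.span {(X 0 : MvPowerSeries (Fin (n+2)) K) ^ T} := by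
    rw [hg, emb_X_pow_mul]
    exact Ideal.mem_span_singleton.mpr ⟨emb g, rfl⟩
  have h2 : f - emb (lam 0 f) ∈ offIdeal K n := by
    apply mem_offIdeal_of_offSupp_coeff_zero
    intro d hd
    rw [map_sub, lam0_emb_coeff f d hd, sub_self]
  have : f = emb (lam 0 f) + (f - emb (lam 0 f)) := by ring
  rw [this]
  exact Submodule.add_mem_sup h1 h2

end
end Stmt16Aux

namespace Stmt16Aux
noncomputable section
open MvPowerSeries Finset

variable {K : Type*} [Field K] {n : ℕ}

local notation "XX" => (PowerSeries.X : PowerSeries K)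

lemma const_zero_of_mem_n {f : MvPowerSeries (Fin (n+2)) K} (hf : f ∈ nIdeal K (n+2)) :
    MvPowerSeries.constantCoeff f = 0 := by
  have : nIdeal K (n+2) ≤ RingHom.ker (MvPowerSeries.constantCoeff (σ := Fin (n+2)) (R := K)) := by
    rw [nIdeal, Ideal.span_le]
    rintro x ⟨i, rfl⟩
    simp [RingHom.mem_ker]
  exact this hf

lemma coeff2_zero_of_slot0 {s r : ℕ} (hs : 3 ≤ s) (hr : 1 ≤ r)
    {f : MvPowerSeries (Fin (n+2)) K} {A₀ Z : PowerSeries K}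
    (h : XX ^ s ∣ lam 0 f + A₀ * Z * XX ^ (2*r+2)) :
    PowerSeries.coeff 2 (lam 0 f) = 0 := by
  have h1 : PowerSeries.coeff 2 (lam 0 f + A₀ * Z * XX ^ (2*r+2)) = 0 :=
    coeff_zero_of_X_pow_dvd h (by omega)
  have h2 : PowerSeries.coeff 2 (A₀ * Z * XX ^ (2*r+2)) = 0 :=
    coeff_zero_of_X_pow_dvd (Dvd.intro_left _ rfl) (by omega)
  rw [map_add, h2, add_zero] at h1
  exact h1

lemma coeff1_zero_of_slot1 {t r : ℕ} (ht : 2 ≤ t) (hr : 1 ≤ r)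
    {f : MvPowerSeries (Fin (n+2)) K} {A₀ : PowerSeries K}
    (h : XX ^ t ∣ lam 1 f + A₀ * XX ^ (r+1)) :
    PowerSeries.coeff 1 (lam 1 f) = 0 := by
  have h1 : PowerSeries.coeff 1 (lam 1 f + A₀ * XX ^ (r+1)) = 0 :=
    coeff_zero_of_X_pow_dvd h (by omega)
  have h2 : PowerSeries.coeff 1 (A₀ * XX ^ (r+1)) = 0 :=
    coeff_zero_of_X_pow_dvd (Dvd.intro_left _ rfl) (by omega)
  rw [map_add, h2, add_zero] at h1
  exact h1

lemma coeff2_sq {f : PowerSeries K} (h0 : PowerSeries.coeff 0 f = 0) :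
    PowerSeries.coeff 2 (f * f) = (PowerSeries.coeff 1 f) ^ 2 := by
  rw [coeff2_mul, h0]
  ring


lemma coeff0_mul (f g : PowerSeries K) :
    PowerSeries.coeff 0 (f * g) = PowerSeries.coeff 0 f * PowerSeries.coeff 0 g := by
  rw [PowerSeries.coeff_mul, Finset.Nat.sum_antidiagonal_eq_sum_range_succ_mk,
    Finset.sum_range_succ]
  norm_num


lemma coeff1_lam0_sum_smul (cf y : Fin (n+2) → MvPowerSeries (Fin (n+2)) K)
    (hy0 : ∀ i, MvPowerSeries.constantCoeff (y i) = 0) :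
    PowerSeries.coeff 1 (lam 0 (∑ i, cf i • y i))
      = ∑ i, (PowerSeries.coeff 0 (lam 0 (cf i))) * (PowerSeries.coeff 1 (lam 0 (y i))) := by
  have h1 : lam (n := n) 0 (∑ i, cf i • y i) = ∑ i, lam 0 (cf i) * lam 0 (y i) := by
    rw [← lam0_apply, map_sum]
    refine Finset.sum_congr rfl fun i _ => ?_
    rw [smul_eq_mul, map_mul]
    rfl
  rw [h1, map_sum]
  refine Finset.sum_congr rfl fun i _ => ?_
  rw [coeff1_mul]
  have : PowerSeries.coeff 0 (lam 0 (y i)) = 0 := by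
    rw [PowerSeries.coeff_zero_eq_constantCoeff, constantCoeff_lam0, hy0]
  rw [this, mul_zero, add_zero]

lemma coeff0_lam1_sum_smul (cf y : Fin (n+2) → MvPowerSeries (Fin (n+2)) K)
    (hy0 : ∀ i, MvPowerSeries.constantCoeff (y i) = 0) :
    PowerSeries.coeff 0 (lam 1 (∑ i, cf i • y i))
      = ∑ i, (PowerSeries.coeff 0 (lam 0 (cf i))) * (PowerSeries.coeff 0 (lam 1 (y i))) := by
  have h1 : lam (n := n) 1 (∑ i, cf i • y i)
      = ∑ i, (lam 0 (cf i) * lam 1 (y i) + lam 1 (cf i) * lam 0 (y i)) := by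
    have : ∀ (m : Finset (Fin (n+2))), lam (n := n) 1 (∑ i ∈ m, cf i • y i)
        = ∑ i ∈ m, (lam 0 (cf i) * lam 1 (y i) + lam 1 (cf i) * lam 0 (y i)) := by
      intro m
      induction m using Finset.induction with
      | empty => simp [lam_zero]
      | insert _ _ hmem ih =>
        rw [Finset.sum_insert hmem, Finset.sum_insert hmem, lam_add, ih, smul_eq_mul, lam1_mul]
    exact this _
  rw [h1, map_sum]
  refine Finset.sum_congr rfl fun i _ => ?_
  rw [map_add, coeff0_mul, coeff0_mul]
  have : PowerSeries.coeff 0 (lam 0 (y i)) = 0 := by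
    rw [PowerSeries.coeff_zero_eq_constantCoeff, constantCoeff_lam0, hy0]
  rw [this, mul_zero, add_zero]


lemma dvd_shift {A C : ℕ} (h : C ≤ A) {f : PowerSeries K} (hf : XX ^ A ∣ f) :
    XX ^ C ∣ f :=
  (pow_dvd_pow _ h).trans hf

lemma dvd_mul_shift {A B C : ℕ} (h : C ≤ A + B) {f g : PowerSeries K}
    (hf : XX ^ A ∣ f) (hg : XX ^ B ∣ g) : XX ^ C ∣ f * g :=
  (pow_dvd_pow _ h).trans (by rw [pow_add]; exact mul_dvd_mul hf hg)

end
end Stmt16Aux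


open Stmt16Aux in
open MvPowerSeries in
/-- If `s ≥ 2t`, `1 ≤ r ≤ t - 2`, `2(r+1) = s - t + 1` and `I_{r,z} = φ_y(I_{r,w})` for a
system of generators `y₁,…,y_h` of `n`, then `z - φ_y(w) ∈ (x₁^{t-r-1}) + (x₂,…,x_h)`. -/
theorem stmt_16 {k : Type*} [Field k] [IsAlgClosed k] [CharZero k] (n s t : ℕ)
    (hst : t + 1 ≤ s) (ht : 3 ≤ t + 1) (h2t : 2 * t ≤ s)
    (r : ℕ) (hr1 : 1 ≤ r) (hr2 : r ≤ t - 2) (hr3 : 2 * (r + 1) = s - t + 1)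
    (z w : MvPowerSeries (Fin (n + 2)) k) (hz : IsUnit z) (hw : IsUnit w)
    (y : Fin (n + 2) → MvPowerSeries (Fin (n + 2)) k)
    (hy : Ideal.span (Set.range y) = nIdeal k (n + 2))
    (φ : MvPowerSeries (Fin (n + 2)) k ≃ₐ[k] MvPowerSeries (Fin (n + 2)) k)
    (hφ : ∀ i, φ (X i) = y i)
    (heq : Ipz k n s t r z = Iy k n s t r (φ w) y) :
    z - φ w ∈
      Ideal.span {(X 0 : MvPowerSeries (Fin (n + 2)) k) ^ (t - r - 1)} + offIdeal k n := by
  classical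
  -- arithmetic facts
  have hs : s = t + (2*r+1) := by omega
  have hrt : r + 2 ≤ t := by omega
  have ht2r1 : t ≤ 2*r+1 := by omega
  have hts : t ≤ s := by omega
  have ht2r : t ≤ 2*r+2 := by omega
  have hE : s - t + 1 = 2*r+2 := by omega
  have hs3 : 3 ≤ s := by omega
  have ht2 : 2 ≤ t := by omega
  have hTr : t - r - 1 ≤ r := by omega
  have htT : t = (r+1) + (t - r - 1) := by omega
  -- memberships of the `y`-generators in `I = Ipz z`
  have hHmem : (y 1^2 - y 0^(r+1) * y 1 - φ w * y 0^(2*r+2)) ∈ Ipz k n s t r z := by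
    rw [heq, Iy]
    apply Ideal.subset_span
    apply Set.mem_union_right
    rw [show (2*r+2 : ℕ) = s - t + 1 from by omega]
    exact Set.mem_insert _ _
  have hKmem : (y 0^t * y 1) ∈ Ipz k n s t r z := by
    rw [heq, Iy]
    exact Ideal.subset_span (Set.mem_union_right _ (Set.mem_insert_of_mem _ rfl))
  have hPmem : ∀ i j : Fin (n+2), i < j → (i, j) ≠ (0,1) → y i * y j ∈ Ipz k n s t r z := by
    intro i j h1 h2
    rw [heq, Iy]
    exact Ideal.subset_span (Set.mem_union_left _ (Set.mem_union_left _ ⟨i, j, h1, h2, rfl⟩))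
  have hSmem : ∀ j : Fin (n+2), 2 ≤ (j : ℕ) → y j^2 - y 0^s ∈ Ipz k n s t r z := by
    intro j hj
    rw [heq, Iy]
    exact Ideal.subset_span (Set.mem_union_left _ (Set.mem_union_right _ ⟨j, hj, rfl⟩))
  -- basic coefficient facts
  have hyn : ∀ i, MvPowerSeries.constantCoeff (y i) = 0 := fun i =>
    const_zero_of_mem_n (hy ▸ Ideal.subset_span (Set.mem_range_self i))
  have hc00 : ∀ i, PowerSeries.coeff 0 (lam 0 (y i)) = 0 := fun i => by
    rw [PowerSeries.coeff_zero_eq_constantCoeff, constantCoeff_lam0, hyn]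
  have hXp : (PowerSeries.X : PowerSeries k) ∣ lam 0 (y 0) := X_dvd_lam0 _ (hyn 0)
  have hXc : (PowerSeries.X : PowerSeries k) ∣ lam 0 (y 1) := X_dvd_lam0 _ (hyn 1)
  have hXpj : ∀ j : ℕ, (PowerSeries.X : PowerSeries k)^j ∣ (lam 0 (y 0))^j :=
    fun j => pow_dvd_pow_of_dvd hXp j
  have hl0pow : ∀ j : ℕ, lam 0 ((y 0) ^ j) = (lam 0 (y 0)) ^ j := fun j => by
    rw [← lam0_apply, map_pow]
    rfl
  have hOB : ∀ j kk : ℕ, (PowerSeries.X : PowerSeries k)^(j - kk) ∣ lam kk ((y 0) ^ j) :=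
    fun j kk => X_pow_dvd_lam_pow (y 0) (hyn 0) j kk
  -- lam 0 of the special element
  have hH0exp : lam 0 (y 1^2 - y 0^(r+1) * y 1 - φ w * y 0^(2*r+2))
      = lam 0 (y 1) * lam 0 (y 1) - (lam 0 (y 0))^(r+1) * lam 0 (y 1)
        - lam 0 (φ w) * (lam 0 (y 0))^(2*r+2) := by
    rw [lam_sub, lam_sub, pow_two, lam0_mul, lam0_mul, lam0_mul, hl0pow, hl0pow]
  -- Step 1 : linear coefficients
  have haj : ∀ j : Fin (n+2), 2 ≤ (j : ℕ) → PowerSeries.coeff 1 (lam 0 (y j)) = 0 := by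
    intro j hj
    obtain ⟨A₀, A₁, A₂, h0, h1, h2, h3⟩ := PP_of_mem_I hts ht2r hE z (hSmem j hj)
    have h2c := coeff2_zero_of_slot0 hs3 hr1 h0
    have hexp : lam 0 (y j ^ 2 - y 0 ^ s) = lam 0 (y j) * lam 0 (y j) - (lam 0 (y 0)) ^ s := by
      rw [lam_sub, hl0pow, pow_two, lam0_mul]
    rw [hexp, map_sub] at h2c
    have hps : PowerSeries.coeff 2 ((lam 0 (y 0)) ^ s) = 0 :=
      coeff_zero_of_X_pow_dvd (dvd_shift hs3 (hXpj s)) (by omega)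
    rw [hps, sub_zero, coeff2_sq (hc00 j)] at h2c
    exact pow_eq_zero_iff (by norm_num) |>.mp h2c
  have ha1 : PowerSeries.coeff 1 (lam 0 (y 1)) = 0 := by
    obtain ⟨A₀, A₁, A₂, h0, h1, h2, h3⟩ := PP_of_mem_I hts ht2r hE z hHmem
    have h2c := coeff2_zero_of_slot0 hs3 hr1 h0
    rw [hH0exp, map_sub, map_sub] at h2c
    have hd1 : PowerSeries.coeff 2 ((lam 0 (y 0))^(r+1) * lam 0 (y 1)) = 0 := by
      refine coeff_zero_of_X_pow_dvd
        (dvd_mul_shift (A := r+1) (B := 1) (C := r+2) (by omega) (hXpj (r+1)) ?_)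
        (by omega)
      rw [pow_one]
      exact hXc
    have hd2 : PowerSeries.coeff 2 (lam 0 (φ w) * (lam 0 (y 0))^(2*r+2)) = 0 :=
      coeff_zero_of_X_pow_dvd ((hXpj (2*r+2)).mul_left _) (by omega)
    rw [hd1, hd2, sub_zero, sub_zero, coeff2_sq (hc00 1)] at h2c
    exact pow_eq_zero_iff (by norm_num) |>.mp h2c
  -- a₀ ≠ 0
  have hx0 : (X 0 : MvPowerSeries (Fin (n+2)) k) ∈ Ideal.span (Set.range y) := by
    rw [hy, nIdeal]
    exact Ideal.subset_span ⟨0, rfl⟩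
  obtain ⟨cf, hcf⟩ := (Submodule.mem_span_range_iff_exists_fun _).mp hx0
  have key0 : ∑ i, (PowerSeries.coeff 0 (lam 0 (cf i))) *
      (PowerSeries.coeff 1 (lam 0 (y i))) = 1 := by
    have h := congrArg (fun f => PowerSeries.coeff 1 (lam (n := n) 0 f)) hcf
    rw [coeff1_lam0_sum_smul cf y hyn, lam0_X0, PowerSeries.coeff_one_X] at h
    exact h
  have ha0 : PowerSeries.coeff 1 (lam 0 (y 0)) ≠ 0 := by
    intro h0a
    rw [Finset.sum_eq_zero ?_] at key0
    · exact absurd key0 (by norm_num)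
    · intro i _
      rcases eq_or_ne i 0 with rfl | hne
      · rw [h0a, mul_zero]
      · have hcase : (i : ℕ) = 1 ∨ 2 ≤ (i : ℕ) := by
          have : (i : ℕ) ≠ 0 := fun hv => hne (Fin.ext (by rw [hv]; rfl))
          omega
        rcases hcase with h1 | h2
        · have : i = 1 := Fin.ext (by rw [h1, Fin.val_one])
          rw [this, ha1, mul_zero]
        · rw [haj i h2, mul_zero]
  -- b_j = 0 for j ≥ 2
  have hbj : ∀ j : Fin (n+2), 2 ≤ (j : ℕ) → PowerSeries.coeff 0 (lam 1 (y j)) = 0 := by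
    intro j hj
    have hij : (0 : Fin (n+2)) < j := by
      rw [Fin.lt_def]
      have : ((0 : Fin (n+2)) : ℕ) = 0 := rfl
      omega
    have hne : ((0 : Fin (n+2)), j) ≠ ((0 : Fin (n+2)), 1) := by
      intro hpair
      have hj1 : j = 1 := (Prod.ext_iff.mp hpair).2
      rw [hj1, Fin.val_one] at hj
      omega
    obtain ⟨A₀, A₁, A₂, h0, h1, h2, h3⟩ := PP_of_mem_I hts ht2r hE z (hPmem 0 j hij hne)
    have h1c := coeff1_zero_of_slot1 ht2 hr1 h1
    rw [lam1_mul, map_add, coeff1_mul, coeff1_mul, hc00 0, hc00 j, haj j hj] at h1c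
    simp only [zero_mul, mul_zero, add_zero, zero_add] at h1c
    exact (mul_eq_zero.mp h1c).resolve_left ha0
  -- b₁ ≠ 0
  have hx1 : (X 1 : MvPowerSeries (Fin (n+2)) k) ∈ Ideal.span (Set.range y) := by
    rw [hy, nIdeal]
    exact Ideal.subset_span ⟨1, rfl⟩
  obtain ⟨cg, hcg⟩ := (Submodule.mem_span_range_iff_exists_fun _).mp hx1
  have key1a : ∑ i, (PowerSeries.coeff 0 (lam 0 (cg i))) *
      (PowerSeries.coeff 1 (lam 0 (y i))) = 0 := by
    have h := congrArg (fun f => PowerSeries.coeff 1 (lam (n := n) 0 f)) hcg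
    rw [coeff1_lam0_sum_smul cg y hyn, lam0_X1, map_zero] at h
    exact h
  have key1b : ∑ i, (PowerSeries.coeff 0 (lam 0 (cg i))) *
      (PowerSeries.coeff 0 (lam 1 (y i))) = 1 := by
    have h := congrArg (fun f => PowerSeries.coeff 0 (lam (n := n) 1 f)) hcg
    rw [coeff0_lam1_sum_smul cg y hyn, lam1_X1] at h
    simpa using h
  have hcg0 : PowerSeries.coeff 0 (lam 0 (cg 0)) = 0 := by
    rw [Finset.sum_eq_single (0 : Fin (n+2))] at key1a
    · exact (mul_eq_zero.mp key1a).resolve_right ha0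
    · intro i _ hne
      have hcase : (i : ℕ) = 1 ∨ 2 ≤ (i : ℕ) := by
        have : (i : ℕ) ≠ 0 := fun hv => hne (Fin.ext (by rw [hv]; rfl))
        omega
      rcases hcase with h1 | h2
      · have : i = 1 := Fin.ext (by rw [h1, Fin.val_one])
        rw [this, ha1, mul_zero]
      · rw [haj i h2, mul_zero]
    · intro habs
      exact absurd (Finset.mem_univ _) habs
  have hb1 : PowerSeries.coeff 0 (lam 1 (y 1)) ≠ 0 := by
    intro hb
    rw [Finset.sum_eq_zero ?_] at key1b
    · exact absurd key1b (by norm_num)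
    · intro i _
      rcases eq_or_ne i 0 with rfl | hne
      · rw [hcg0, zero_mul]
      · have hcase : (i : ℕ) = 1 ∨ 2 ≤ (i : ℕ) := by
          have : (i : ℕ) ≠ 0 := fun hv => hne (Fin.ext (by rw [hv]; rfl))
          omega
        rcases hcase with h1 | h2
        · have : i = 1 := Fin.ext (by rw [h1, Fin.val_one])
          rw [this, hb, mul_zero]
        · rw [hbj i h2, mul_zero]
  -- units
  obtain ⟨p₁, hp₁⟩ := hXp
  have hp₁u : IsUnit p₁ := by
    rw [PowerSeries.isUnit_iff_constantCoeff, isUnit_iff_ne_zero]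
    intro hc0
    apply ha0
    have h1 : PowerSeries.coeff 1 (PowerSeries.X * p₁) = PowerSeries.coeff 0 p₁ := by
      simpa using PowerSeries.coeff_succ_X_mul 0 p₁
    rw [hp₁, h1, PowerSeries.coeff_zero_eq_constantCoeff]
    exact hc0
  have hdu : IsUnit (lam 1 (y 1)) := by
    rw [PowerSeries.isUnit_iff_constantCoeff, isUnit_iff_ne_zero]
    intro hc0
    apply hb1
    rw [PowerSeries.coeff_zero_eq_constantCoeff]
    exact hc0
  -- main witnesses from the two key memberships
  obtain ⟨a, a1, a2, H0, H1, H2, H3⟩ := PP_of_mem_I hts ht2r hE z hHmem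
  obtain ⟨a', a1', a2', K0, K1, K2, K3⟩ := PP_of_mem_I hts ht2r hE z hKmem
  -- order bound for lam 3 of the K-element
  have hlam3K : (PowerSeries.X : PowerSeries k)^(t-2) ∣ lam 3 (y 0^t * y 1) := by
    rw [lam3_mul, hl0pow]
    refine dvd_add (dvd_add (dvd_add ?_ ?_) ?_) ?_
    · exact (dvd_shift (by omega) (hXpj t)).mul_right _
    · exact (dvd_shift (by omega) (hOB t 1)).mul_right _
    · exact (dvd_shift (by omega) (hOB t 2)).mul_right _
    · exact dvd_mul_shift (A := t-3) (B := 1) (by omega) (hOB t 3)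
        (by rw [pow_one]; exact hXc)
  obtain ⟨γ, hγ⟩ := K3
  have hA1X : (PowerSeries.X : PowerSeries k)^(t-1) ∣ a1' * PowerSeries.X^(r+1) := by
    have ha1'e : a1' = lam 3 (y 0^t * y 1) + a2' * PowerSeries.X^(r+1)
        - PowerSeries.X^t * γ := by
      rw [← hγ]; ring
    rw [ha1'e]
    have e : (lam 3 (y 0^t * y 1) + a2' * PowerSeries.X^(r+1) - PowerSeries.X^t * γ)
          * PowerSeries.X^(r+1)
        = lam 3 (y 0^t * y 1) * PowerSeries.X^(r+1)
          + a2' * (PowerSeries.X^(r+1) * PowerSeries.X^(r+1))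
          - (PowerSeries.X^t * γ) * PowerSeries.X^(r+1) := by ring
    rw [e]
    refine dvd_sub (dvd_add ?_ ?_) ?_
    · exact dvd_mul_shift (A := t-2) (B := r+1) (by omega) hlam3K dvd_rfl
    · refine Dvd.dvd.mul_left ?_ a2'
      rw [← pow_add]
      exact pow_dvd_pow _ (by omega)
    · exact dvd_mul_shift (A := t) (B := r+1) (by omega) (dvd_mul_right _ γ) dvd_rfl
  have hlam2K : (PowerSeries.X : PowerSeries k)^(t-1) ∣ lam 2 (y 0^t * y 1) := by
    rw [lam2_mul, hl0pow]
    refine dvd_add (dvd_add ?_ ?_) ?_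
    · exact (dvd_shift (by omega) (hXpj t)).mul_right _
    · exact (dvd_shift (by omega) (hOB t 1)).mul_right _
    · exact dvd_mul_shift (A := t-2) (B := 1) (by omega) (hOB t 2)
        (by rw [pow_one]; exact hXc)
  obtain ⟨δ, hδ⟩ := K2
  have hA' : (PowerSeries.X : PowerSeries k)^(t-1) ∣ a' := by
    have e : a' = lam 2 (y 0^t * y 1) + a1' * PowerSeries.X^(r+1)
        - PowerSeries.X^t * δ := by
      rw [← hδ]; ring
    rw [e]
    exact dvd_sub (dvd_add hlam2K hA1X) (dvd_shift (by omega) (dvd_mul_right _ δ))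
  -- X^(2r+1) divides c = lam 0 (y 1)
  have hK0exp : lam 0 (y 0^t * y 1) = (lam 0 (y 0))^t * lam 0 (y 1) := by
    rw [lam0_mul, hl0pow]
  have hXsc : (PowerSeries.X : PowerSeries k)^s ∣ (lam 0 (y 0))^t * lam 0 (y 1) := by
    have h1 : (PowerSeries.X : PowerSeries k)^s ∣ a' * lam 0 z * PowerSeries.X^(2*r+2) :=
      dvd_mul_shift (A := t-1) (B := 2*r+2) (by omega) (hA'.mul_right _) dvd_rfl
    have e : (lam 0 (y 0))^t * lam 0 (y 1)
        = (lam 0 (y 0^t * y 1) + a' * lam 0 z * PowerSeries.X^(2*r+2))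
          - a' * lam 0 z * PowerSeries.X^(2*r+2) := by
      rw [hK0exp]; ring
    rw [e]
    exact dvd_sub K0 h1
  have hc2r : (PowerSeries.X : PowerSeries k)^(2*r+1) ∣ lam 0 (y 1) := by
    have e : (lam 0 (y 0))^t * lam 0 (y 1)
        = PowerSeries.X^t * (p₁^t * lam 0 (y 1)) := by
      rw [hp₁]; ring
    rw [e, hs] at hXsc
    exact X_pow_dvd_of_unit_mul (hp₁u.pow t) (X_pow_dvd_of_mul hXsc)
  obtain ⟨c₁, hc₁⟩ := hc2r
  -- step S3 : X^(t-r-1) ∣ a - p₁^(r+1) * d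
  have hH1exp : lam 1 (y 1^2 - y 0^(r+1) * y 1 - φ w * y 0^(2*r+2))
      = (lam 0 (y 1) * lam 1 (y 1) + lam 1 (y 1) * lam 0 (y 1))
        - ((lam 0 (y 0))^(r+1) * lam 1 (y 1) + lam 1 (y 0^(r+1)) * lam 0 (y 1))
        - (lam 0 (φ w) * lam 1 (y 0^(2*r+2)) + lam 1 (φ w) * (lam 0 (y 0))^(2*r+2)) := by
    rw [lam_sub, lam_sub, pow_two, lam1_mul, lam1_mul, lam1_mul, hl0pow, hl0pow]
  have hc2r' : (PowerSeries.X : PowerSeries k)^(2*r+1) ∣ lam 0 (y 1) := ⟨c₁, hc₁⟩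
  have step3a : (PowerSeries.X : PowerSeries k)^t ∣ (lam 0 (y 1) * lam 1 (y 1)
      + lam 1 (y 1) * lam 0 (y 1) - (lam 0 (y 0))^(r+1) * lam 1 (y 1)
      + a * PowerSeries.X^(r+1)) := by
    have herr : (PowerSeries.X : PowerSeries k)^t ∣ lam 1 (y 0^(r+1)) * lam 0 (y 1)
        + (lam 0 (φ w) * lam 1 (y 0^(2*r+2)) + lam 1 (φ w) * (lam 0 (y 0))^(2*r+2)) := by
      refine dvd_add (dvd_mul_shift (A := r) (B := 2*r+1) (by omega) (hOB (r+1) 1) hc2r')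
        (dvd_add ?_ ?_)
      · exact Dvd.dvd.mul_left (dvd_shift (by omega) (hOB (2*r+2) 1)) _
      · exact Dvd.dvd.mul_left (dvd_shift (by omega) (hXpj (2*r+2))) _
    have e : lam 0 (y 1) * lam 1 (y 1) + lam 1 (y 1) * lam 0 (y 1)
        - (lam 0 (y 0))^(r+1) * lam 1 (y 1) + a * PowerSeries.X^(r+1)
        = (lam 1 (y 1^2 - y 0^(r+1) * y 1 - φ w * y 0^(2*r+2)) + a * PowerSeries.X^(r+1))
          + (lam 1 (y 0^(r+1)) * lam 0 (y 1)
            + (lam 0 (φ w) * lam 1 (y 0^(2*r+2)) + lam 1 (φ w) * (lam 0 (y 0))^(2*r+2))) := by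
      rw [hH1exp]; ring
    rw [e]
    exact dvd_add H1 herr
  have S3 : (PowerSeries.X : PowerSeries k)^(t-r-1) ∣ a - p₁^(r+1) * lam 1 (y 1) := by
    have e : lam 0 (y 1) * lam 1 (y 1) + lam 1 (y 1) * lam 0 (y 1)
        - (lam 0 (y 0))^(r+1) * lam 1 (y 1) + a * PowerSeries.X^(r+1)
        = PowerSeries.X^(r+1) * (PowerSeries.X^r * c₁ * lam 1 (y 1)
            + PowerSeries.X^r * (lam 1 (y 1) * c₁)
            - p₁^(r+1) * lam 1 (y 1) + a) := by
      rw [hc₁, hp₁]; ring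
    rw [e, show t = (r+1) + (t-r-1) from htT] at step3a
    have h1 := X_pow_dvd_of_mul step3a
    have h2 : (PowerSeries.X : PowerSeries k)^(t-r-1)
        ∣ PowerSeries.X^r * c₁ * lam 1 (y 1) + PowerSeries.X^r * (lam 1 (y 1) * c₁) := by
      refine dvd_add ?_ ?_
      · exact ((pow_dvd_pow _ hTr).trans (dvd_mul_right _ c₁)).mul_right _
      · exact (pow_dvd_pow _ hTr).trans (dvd_mul_right _ _)
    have e2 : a - p₁^(r+1) * lam 1 (y 1)
        = (PowerSeries.X^r * c₁ * lam 1 (y 1) + PowerSeries.X^r * (lam 1 (y 1) * c₁)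
            - p₁^(r+1) * lam 1 (y 1) + a)
          - (PowerSeries.X^r * c₁ * lam 1 (y 1) + PowerSeries.X^r * (lam 1 (y 1) * c₁)) := by
      ring
    rw [e2]
    exact dvd_sub h1 h2
  -- step S4 : X^(t-r-1) ∣ a - d * d
  have hH2exp : lam 2 (y 1^2 - y 0^(r+1) * y 1 - φ w * y 0^(2*r+2))
      = (lam 0 (y 1) * lam 2 (y 1) + lam 1 (y 1) * lam 1 (y 1) + lam 2 (y 1) * lam 0 (y 1))
        - ((lam 0 (y 0))^(r+1) * lam 2 (y 1) + lam 1 (y 0^(r+1)) * lam 1 (y 1)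
            + lam 2 (y 0^(r+1)) * lam 0 (y 1))
        - (lam 0 (φ w) * lam 2 (y 0^(2*r+2)) + lam 1 (φ w) * lam 1 (y 0^(2*r+2))
            + lam 2 (φ w) * (lam 0 (y 0))^(2*r+2)) := by
    rw [lam_sub, lam_sub, pow_two, lam2_mul, lam2_mul, lam2_mul, hl0pow, hl0pow]
  have h2T : (PowerSeries.X : PowerSeries k)^(t-r-1)
      ∣ lam 2 (y 1^2 - y 0^(r+1) * y 1 - φ w * y 0^(2*r+2)) - a := by
    obtain ⟨ε, hε⟩ := H2
    have e : lam 2 (y 1^2 - y 0^(r+1) * y 1 - φ w * y 0^(2*r+2)) - a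
        = PowerSeries.X^t * ε - a1 * PowerSeries.X^(r+1) := by
      rw [← hε]; ring
    rw [e]
    exact dvd_sub (dvd_shift (by omega) (dvd_mul_right _ _))
      (Dvd.dvd.mul_left (pow_dvd_pow _ (by omega)) a1)
  have hErr2 : (PowerSeries.X : PowerSeries k)^(t-r-1)
      ∣ lam 2 (y 1^2 - y 0^(r+1) * y 1 - φ w * y 0^(2*r+2))
        - lam 1 (y 1) * lam 1 (y 1) := by
    rw [hH2exp]
    have e : (lam 0 (y 1) * lam 2 (y 1) + lam 1 (y 1) * lam 1 (y 1) + lam 2 (y 1) * lam 0 (y 1))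
        - ((lam 0 (y 0))^(r+1) * lam 2 (y 1) + lam 1 (y 0^(r+1)) * lam 1 (y 1)
            + lam 2 (y 0^(r+1)) * lam 0 (y 1))
        - (lam 0 (φ w) * lam 2 (y 0^(2*r+2)) + lam 1 (φ w) * lam 1 (y 0^(2*r+2))
            + lam 2 (φ w) * (lam 0 (y 0))^(2*r+2))
        - lam 1 (y 1) * lam 1 (y 1)
        = (lam 0 (y 1) * lam 2 (y 1) + lam 2 (y 1) * lam 0 (y 1))
          - ((lam 0 (y 0))^(r+1) * lam 2 (y 1) + lam 1 (y 0^(r+1)) * lam 1 (y 1)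
              + lam 2 (y 0^(r+1)) * lam 0 (y 1))
          - (lam 0 (φ w) * lam 2 (y 0^(2*r+2)) + lam 1 (φ w) * lam 1 (y 0^(2*r+2))
              + lam 2 (φ w) * (lam 0 (y 0))^(2*r+2)) := by ring
    rw [e]
    refine dvd_sub (dvd_sub (dvd_add ?_ ?_) (dvd_add (dvd_add ?_ ?_) ?_))
      (dvd_add (dvd_add ?_ ?_) ?_)
    · exact (dvd_shift (le_trans hTr (by omega)) hc2r').mul_right _
    · exact dvd_mul_shift (A := 0) (B := 2*r+1) (by omega) (one_dvd _) hc2r'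
    · exact (dvd_shift (by omega) (hXpj (r+1))).mul_right _
    · exact (dvd_shift (by omega) (hOB (r+1) 1)).mul_right _
    · exact dvd_mul_shift (A := r-1) (B := 2*r+1) (by omega) (hOB (r+1) 2) hc2r'
    · exact Dvd.dvd.mul_left (dvd_shift (by omega) (hOB (2*r+2) 2)) _
    · exact Dvd.dvd.mul_left (dvd_shift (by omega) (hOB (2*r+2) 1)) _
    · exact Dvd.dvd.mul_left (dvd_shift (by omega) (hXpj (2*r+2))) _
  have S4 : (PowerSeries.X : PowerSeries k)^(t-r-1) ∣ a - lam 1 (y 1) * lam 1 (y 1) := by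
    have e : a - lam 1 (y 1) * lam 1 (y 1)
        = (lam 2 (y 1^2 - y 0^(r+1) * y 1 - φ w * y 0^(2*r+2)) - lam 1 (y 1) * lam 1 (y 1))
          - (lam 2 (y 1^2 - y 0^(r+1) * y 1 - φ w * y 0^(2*r+2)) - a) := by ring
    rw [e]
    exact dvd_sub hErr2 h2T
  have S4b : (PowerSeries.X : PowerSeries k)^(t-r-1) ∣ lam 1 (y 1) - p₁^(r+1) := by
    have e : lam 1 (y 1) * (lam 1 (y 1) - p₁^(r+1))
        = (a - p₁^(r+1) * lam 1 (y 1)) - (a - lam 1 (y 1) * lam 1 (y 1)) := by ring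
    exact X_pow_dvd_of_unit_mul hdu (e ▸ dvd_sub S3 S4)
  -- step S5
  have S5 : (PowerSeries.X : PowerSeries k)^(t-r-1)
      ∣ a * lam 0 z - lam 0 (φ w) * p₁^(2*r+2) := by
    have h1 : (PowerSeries.X : PowerSeries k)^(t+r+1)
        ∣ lam 0 (y 1^2 - y 0^(r+1) * y 1 - φ w * y 0^(2*r+2))
          + a * lam 0 z * PowerSeries.X^(2*r+2) := dvd_shift (by omega) H0
    have h2 : (PowerSeries.X : PowerSeries k)^(t+r+1) ∣ lam 0 (y 1) * lam 0 (y 1) :=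
      dvd_mul_shift (A := 2*r+1) (B := 2*r+1) (by omega) hc2r' hc2r'
    have h3 : (PowerSeries.X : PowerSeries k)^(t+r+1) ∣ (lam 0 (y 0))^(r+1) * lam 0 (y 1) :=
      dvd_mul_shift (A := r+1) (B := 2*r+1) (by omega) (hXpj (r+1)) hc2r'
    have e : a * lam 0 z * PowerSeries.X^(2*r+2) - lam 0 (φ w) * (lam 0 (y 0))^(2*r+2)
        = (lam 0 (y 1^2 - y 0^(r+1) * y 1 - φ w * y 0^(2*r+2))
            + a * lam 0 z * PowerSeries.X^(2*r+2))
          - lam 0 (y 1) * lam 0 (y 1) + (lam 0 (y 0))^(r+1) * lam 0 (y 1) := by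
      rw [hH0exp]; ring
    have h4 : (PowerSeries.X : PowerSeries k)^(t+r+1)
        ∣ a * lam 0 z * PowerSeries.X^(2*r+2) - lam 0 (φ w) * (lam 0 (y 0))^(2*r+2) := by
      rw [e]
      exact dvd_add (dvd_sub h1 h2) h3
    have e2 : a * lam 0 z * PowerSeries.X^(2*r+2) - lam 0 (φ w) * (lam 0 (y 0))^(2*r+2)
        = PowerSeries.X^(2*r+2) * (a * lam 0 z - lam 0 (φ w) * p₁^(2*r+2)) := by
      rw [hp₁]; ring
    rw [e2, show t+r+1 = (2*r+2) + (t-r-1) from by omega] at h4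
    exact X_pow_dvd_of_mul h4
  -- conclusion
  have S6 : (PowerSeries.X : PowerSeries k)^(t-r-1)
      ∣ p₁^(2*r+2) * (lam 0 z - lam 0 (φ w)) := by
    have e : p₁^(2*r+2) * (lam 0 z - lam 0 (φ w))
        = (a * lam 0 z - lam 0 (φ w) * p₁^(2*r+2))
          - (a - p₁^(r+1) * lam 1 (y 1)) * lam 0 z
          - p₁^(r+1) * (lam 1 (y 1) - p₁^(r+1)) * lam 0 z := by ring
    rw [e]
    refine dvd_sub (dvd_sub S5 (S3.mul_right _)) ?_
    exact ((S4b.mul_left _).mul_right _)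
  have S7 : (PowerSeries.X : PowerSeries k)^(t-r-1) ∣ lam 0 z - lam 0 (φ w) :=
    X_pow_dvd_of_unit_mul (hp₁u.pow (2*r+2)) S6
  refine mem_target_of_dvd ?_
  rw [lam_sub]
  exact S7
end
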